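/- arXiv:1110.5889 — 3 statements merged into one kernel-verified Lean document; each statement's English description precedes it below -/
import Mathlib

section
/- Suppose there exist stopping times $(\tau^*_i)_{i=1}^N$ and RCLL adapted processes $(W^i)_{i=1}^N$ such that, with $R_i=\min_{j\ne i}\tau^*_j$ and $R=\tau^*_i\wedge R_i$: (i) $(W^i_{t\wedge R})_t$ is a martingale and $(W^i_{t\wedge R_i})_t$ a supermartingale; (ii) $W^i_t 1_{\{t<R_i\}}\ge X^i_t 1_{\{t<R_i\}}$ for all $t$ and $W^i_{\tau^*_i}1_{\{\tau^*_i<R_i\}}=X^i_{\tau^*_i}1_{\{\tau^*_i<R_i\}}$; (iii) $W^i_{R_i}=Y^i_{R_i}1_{\{R_i<T\}}+Q^i_T 1_{\{R_i=T\}}$ and $(Y^i_{R_i}-Q^i_{R_i})1_{\{R_i=\tau^*_i<T\}}=0$. Then $(\tau^*_1,\dots,\tau^*_N)$ is a Nash equilibrium point for the nonzero-sum Dynkin game with payoffs $J_i$, and $J_i(\tau^*_1,\dots,\tau^*_N)=\mathbf{E}[W^i_0]$ for every $i$. -/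
open MeasureTheory Filter Topology

noncomputable section

/-- A real-valued process is RCLL: right-continuous with left limits. -/
def RCLL {Ω : Type*} (f : ℝ → Ω → ℝ) : Prop :=
  ∀ ω t, ContinuousWithinAt (fun s => f s ω) (Set.Ici t) t ∧
    ∃ l : ℝ, Filter.Tendsto (fun s => f s ω) (nhdsWithin t (Set.Iio t)) (nhds l)

/-- Class [D]: the family of values at `[0,T]`-valued stopping times is uniformly
integrable. -/
def ClassD {Ω : Type*} {m : MeasurableSpace Ω} (F : Filtration ℝ m) (μ : Measure Ω)
    (T : ℝ) (f : ℝ → Ω → ℝ) : Prop :=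
  UniformIntegrable
    (fun τ : {τ : Ω → ℝ // IsStoppingTime F (fun ω => (τ ω : WithTop ℝ)) ∧ ∀ ω, τ ω ∈ Set.Icc 0 T} =>
      fun ω => f (τ.1 ω) ω) 1 μ

/-- Payoff of player `i` in the `N`-player nonzero-sum Dynkin game for the tuple of
stopping times `Ts`, with `R_i = min_{j ≠ i} Ts j`. -/
def J {Ω : Type*} {m : MeasurableSpace Ω} (μ : Measure Ω) {N : ℕ}
    (X Q Y : Fin N → ℝ → Ω → ℝ) (i : Fin N) (Ts : Fin N → Ω → ℝ) : ℝ :=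
  ∫ ω,
    (if Ts i ω < ⨅ j : {j : Fin N // j ≠ i}, Ts j.1 ω then X i (Ts i ω) ω
     else if Ts i ω = ⨅ j : {j : Fin N // j ≠ i}, Ts j.1 ω then Q i (Ts i ω) ω
     else Y i (⨅ j : {j : Fin N // j ≠ i}, Ts j.1 ω) ω) ∂μ

private lemma ofReal_max_zero (x : ℝ) : ENNReal.ofReal (max x 0) = ENNReal.ofReal x := by
  rcases le_total x 0 with h | h
  · rw [max_eq_right h, ENNReal.ofReal_zero, eq_comm, ENNReal.ofReal_eq_zero]
    exact h
  · rw [max_eq_left h]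

private lemma integrable_ite {Ω : Type*} {m : MeasurableSpace Ω} {μ : Measure Ω}
    {u v : Ω → ℝ} {p : Ω → Prop} [∀ ω, Decidable (p ω)]
    (hp : MeasurableSet {ω | p ω}) (hu : Integrable u μ) (hv : Integrable v μ) :
    Integrable (fun ω => if p ω then u ω else v ω) μ := by
  have : (fun ω => if p ω then u ω else v ω)
      = fun ω => Set.indicator {ω | p ω} u ω + Set.indicator {ω | p ω}ᶜ v ω := by
    funext ω
    by_cases h : p ω <;>
      simp [Set.indicator_apply, Set.mem_setOf_eq, Set.mem_compl_iff, h]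
  rw [this]
  exact (hu.indicator hp).add (hv.indicator hp.compl)

private lemma classD_mem {Ω : Type*} {m : MeasurableSpace Ω} {F : Filtration ℝ m} {μ : Measure Ω}
    {T : ℝ} {f : ℝ → Ω → ℝ} (hf : ClassD F μ T f) {σ : Ω → ℝ}
    (hσ : IsStoppingTime F (fun ω => (σ ω : WithTop ℝ))) (hmem : ∀ ω, σ ω ∈ Set.Icc 0 T) :
    Integrable (fun ω => f (σ ω) ω) μ := by
  obtain ⟨hmeas, -, C, hC⟩ := hf
  exact memLp_one_iff_integrable.1
    ⟨hmeas ⟨σ, hσ, hmem⟩, lt_of_le_of_lt (hC ⟨σ, hσ, hmem⟩) ENNReal.coe_lt_top⟩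

private lemma classD_tail {Ω : Type*} {m : MeasurableSpace Ω} {F : Filtration ℝ m} {μ : Measure Ω}
    [IsProbabilityMeasure μ] {T : ℝ} {f : ℝ → Ω → ℝ} (hf : ClassD F μ T f) {ε : ℝ} (hε : 0 < ε) :
    ∃ lam : ℝ, 0 ≤ lam ∧ ∀ σ : Ω → ℝ, IsStoppingTime F (fun ω => (σ ω : WithTop ℝ)) → (∀ ω, σ ω ∈ Set.Icc 0 T) →
      ∫ ω, max (|f (σ ω) ω| - lam) 0 ∂μ ≤ ε := by
  obtain ⟨hmeas, htail⟩ := (uniformIntegrable_iff le_rfl ENNReal.one_ne_top).1 hf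
  obtain ⟨C, hC⟩ := htail ε hε
  refine ⟨C, C.coe_nonneg, fun σ hσ hmem => ?_⟩
  have hfint : Integrable (fun ω => f (σ ω) ω) μ := classD_mem hf hσ hmem
  have hmax_int : Integrable (fun ω => max (|f (σ ω) ω| - (C : ℝ)) 0) μ :=
    (hfint.abs.sub (integrable_const _)).pos_part
  have h1 : ENNReal.ofReal (∫ ω, max (|f (σ ω) ω| - (C : ℝ)) 0 ∂μ)
      = ∫⁻ ω, ENNReal.ofReal (max (|f (σ ω) ω| - (C : ℝ)) 0) ∂μ :=
    ofReal_integral_eq_lintegral_ofReal hmax_int (Eventually.of_forall fun ω => le_max_right _ _)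
  have h2 : (∫⁻ ω, ENNReal.ofReal (max (|f (σ ω) ω| - (C : ℝ)) 0) ∂μ)
      ≤ eLpNorm ({x | C ≤ ‖f (σ x) x‖₊}.indicator (fun ω => f (σ ω) ω)) 1 μ := by
    rw [eLpNorm_one_eq_lintegral_enorm]
    refine lintegral_mono fun ω => ?_
    by_cases hω : ω ∈ {x | C ≤ ‖f (σ x) x‖₊}
    · rw [Set.indicator_of_mem hω]
      calc ENNReal.ofReal (max (|f (σ ω) ω| - (C : ℝ)) 0)
          ≤ ENNReal.ofReal |f (σ ω) ω| := by
            refine ENNReal.ofReal_le_ofReal (max_le (by linarith [C.coe_nonneg]) (abs_nonneg _))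
        _ = ‖f (σ ω) ω‖ₑ := by
            rw [← Real.norm_eq_abs, ofReal_norm]
    · rw [Set.indicator_of_notMem hω]
      have hlt : |f (σ ω) ω| < (C : ℝ) := by
        have h0 : ¬ C ≤ ‖f (σ ω) ω‖₊ := hω
        have h' : (‖f (σ ω) ω‖₊ : ℝ) < (C : ℝ) := by exact_mod_cast not_le.1 h0
        rwa [coe_nnnorm, Real.norm_eq_abs] at h'
      rw [max_eq_right (by linarith)]
      simp
  have h3 := hC ⟨σ, hσ, hmem⟩
  have h4 : ENNReal.ofReal (∫ ω, max (|f (σ ω) ω| - (C : ℝ)) 0 ∂μ) ≤ ENNReal.ofReal ε := by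
    rw [h1]; exact h2.trans h3
  exact (ENNReal.ofReal_le_ofReal_iff hε.le).1 h4

private lemma fatou_UI {Ω : Type*} {m : MeasurableSpace Ω} {μ : Measure Ω}
    [IsProbabilityMeasure μ]
    {h : Ω → ℝ} {hs : ℕ → Ω → ℝ} {g : ℕ → Ω → ℝ} {c : ℝ}
    (hh : Integrable h μ) (hint : ∀ n, Integrable (hs n) μ) (hgi : ∀ n, Integrable (g n) μ)
    (hlb : ∀ n, ∀ᵐ ω ∂μ, -(g n ω) ≤ hs n ω)
    (hconv : ∀ᵐ ω ∂μ, ∃ H : ℝ, Tendsto (fun n => hs n ω) atTop (nhds H) ∧ h ω ≤ H)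
    (hc : ∀ n, ∫ ω, hs n ω ∂μ ≤ c)
    (htail : ∀ ε : ℝ, 0 < ε → ∃ lam : ℝ, ∀ n, ∫ ω, max (g n ω - lam) 0 ∂μ ≤ ε) :
    ∫ ω, h ω ∂μ ≤ c := by
  have haux : ∀ ε : ℝ, 0 < ε → ∫ ω, h ω ∂μ ≤ c + ε := by
    intro ε hε
    obtain ⟨lam, hlam⟩ := htail ε hε
    set φ : ℕ → Ω → ℝ := fun n ω => hs n ω + lam + max (g n ω - lam) 0 with hφ
    have hφint : ∀ n, Integrable (φ n) μ := fun n =>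
      ((hint n).add (integrable_const lam)).add (((hgi n).sub (integrable_const lam)).pos_part)
    have hφ0 : ∀ n, ∀ᵐ ω ∂μ, 0 ≤ φ n ω := fun n =>
      (hlb n).mono fun ω hω => by
        have h1 := le_max_left (g n ω - lam) 0
        simp only [hφ]
        linarith
    have hφle : ∀ n, ∫ ω, φ n ω ∂μ ≤ c + lam + ε := by
      intro n
      have i1 : Integrable (fun ω => hs n ω + lam) μ := (hint n).add (integrable_const lam)
      have i2 : Integrable (fun ω => max (g n ω - lam) 0) μ :=
        ((hgi n).sub (integrable_const lam)).pos_part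
      have heq : ∫ ω, φ n ω ∂μ
          = (∫ ω, hs n ω ∂μ) + lam + ∫ ω, max (g n ω - lam) 0 ∂μ := by
        simp only [hφ]
        rw [integral_add i1 i2, integral_add (hint n) (integrable_const lam),
          integral_const, probReal_univ]
        simp
      rw [heq]
      have h1 := hlam n
      have h2 := hc n
      linarith
    have hcl : (0:ℝ) ≤ c + lam + ε :=
      le_trans (integral_nonneg_of_ae (hφ0 0)) (hφle 0)
    have hmeas : ∀ n, AEMeasurable (fun ω => ENNReal.ofReal (φ n ω)) μ := fun n =>
      ENNReal.measurable_ofReal.comp_aemeasurable (hφint n).aemeasurable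
    have hlimpt : ∀ᵐ ω ∂μ,
        ENNReal.ofReal (h ω + lam) ≤ liminf (fun n => ENNReal.ofReal (φ n ω)) atTop := by
      filter_upwards [hconv] with ω hω
      obtain ⟨H, hH, hhH⟩ := hω
      have h1 : Tendsto (fun n => ENNReal.ofReal (hs n ω + lam)) atTop
          (nhds (ENNReal.ofReal (H + lam))) :=
        (ENNReal.continuous_ofReal.tendsto _).comp (hH.add_const lam)
      calc ENNReal.ofReal (h ω + lam) ≤ ENNReal.ofReal (H + lam) :=
            ENNReal.ofReal_le_ofReal (by linarith)
        _ = liminf (fun n => ENNReal.ofReal (hs n ω + lam)) atTop := h1.liminf_eq.symm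
        _ ≤ liminf (fun n => ENNReal.ofReal (φ n ω)) atTop := by
            refine liminf_le_liminf (Eventually.of_forall fun n => ?_)
            refine ENNReal.ofReal_le_ofReal ?_
            have h2 := le_max_right (g n ω - lam) 0
            simp only [hφ]
            linarith
    have hkey : ∫⁻ ω, ENNReal.ofReal (h ω + lam) ∂μ ≤ ENNReal.ofReal (c + lam + ε) := by
      calc ∫⁻ ω, ENNReal.ofReal (h ω + lam) ∂μ
          ≤ ∫⁻ ω, liminf (fun n => ENNReal.ofReal (φ n ω)) atTop ∂μ := lintegral_mono_ae hlimpt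
        _ ≤ liminf (fun n => ∫⁻ ω, ENNReal.ofReal (φ n ω) ∂μ) atTop := lintegral_liminf_le' hmeas
        _ ≤ liminf (fun _ : ℕ => ENNReal.ofReal (c + lam + ε)) atTop := by
            refine liminf_le_liminf (Eventually.of_forall fun n => ?_)
            rw [← ofReal_integral_eq_lintegral_ofReal (hφint n) (hφ0 n)]
            exact ENNReal.ofReal_le_ofReal (hφle n)
        _ = ENNReal.ofReal (c + lam + ε) := liminf_const _
    have hint1 : Integrable (fun ω => h ω + lam) μ := hh.add (integrable_const lam)
    have h2 : ∫ ω, (h ω + lam) ∂μ ≤ ∫ ω, max (h ω + lam) 0 ∂μ :=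
      integral_mono hint1 hint1.pos_part fun ω => le_max_left _ _
    have h3 : ENNReal.ofReal (∫ ω, max (h ω + lam) 0 ∂μ)
        = ∫⁻ ω, ENNReal.ofReal (max (h ω + lam) 0) ∂μ :=
      ofReal_integral_eq_lintegral_ofReal hint1.pos_part
        (Eventually.of_forall fun ω => le_max_right _ _)
    have h4 : (∫⁻ ω, ENNReal.ofReal (max (h ω + lam) 0) ∂μ)
        = ∫⁻ ω, ENNReal.ofReal (h ω + lam) ∂μ :=
      lintegral_congr fun ω => ofReal_max_zero _
    have h5 : ENNReal.ofReal (∫ ω, max (h ω + lam) 0 ∂μ) ≤ ENNReal.ofReal (c + lam + ε) := by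
      rw [h3, h4]; exact hkey
    have h6 : ∫ ω, max (h ω + lam) 0 ∂μ ≤ c + lam + ε :=
      (ENNReal.ofReal_le_ofReal_iff hcl).1 h5
    have h7 : ∫ ω, (h ω + lam) ∂μ = ∫ ω, h ω ∂μ + lam := by
      rw [integral_add hh (integrable_const lam), integral_const, probReal_univ]
      simp
    linarith
  by_contra hcon
  push_neg at hcon
  have := haux ((∫ ω, h ω ∂μ - c) / 2) (by linarith)
  linarith

private lemma grid_isStoppingTime {Ω : Type*} {m : MeasurableSpace Ω} {F : Filtration ℝ m}
    {θ : Ω → ℝ} (hθ : IsStoppingTime F (fun ω => (θ ω : WithTop ℝ))) {d : ℝ} (hd : 0 < d) :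
    IsStoppingTime F fun ω => ((((⌈θ ω / d⌉ : ℤ) : ℝ) * d : ℝ) : WithTop ℝ) := by
  intro t
  have hset : {ω | ((((⌈θ ω / d⌉ : ℤ) : ℝ) * d : ℝ) : WithTop ℝ) ≤ (t : WithTop ℝ)}
      = {ω | (θ ω : WithTop ℝ) ≤ ((((⌊t / d⌋ : ℤ) : ℝ) * d : ℝ) : WithTop ℝ)} := by
    ext ω
    simp only [Set.mem_setOf_eq, WithTop.coe_le_coe]
    rw [← le_div_iff₀ hd, show (((⌈θ ω / d⌉ : ℤ) : ℝ) ≤ t / d) ↔ (⌈θ ω / d⌉ ≤ ⌊t / d⌋) from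
      (Int.le_floor).symm, Int.ceil_le, ← div_le_iff₀ hd]
  show MeasurableSet[F t] {ω | ((((⌈θ ω / d⌉ : ℤ) : ℝ) * d : ℝ) : WithTop ℝ) ≤ (t : WithTop ℝ)}
  rw [hset]
  have hle : ((⌊t / d⌋ : ℤ) : ℝ) * d ≤ t := by
    rw [← le_div_iff₀ hd]; exact Int.floor_le _
  exact F.mono hle _ (hθ _)

private lemma isStoppingTime_iInf_fin {Ω : Type*} {m : MeasurableSpace Ω} {F : Filtration ℝ m}
    {ι : Type*} [Finite ι] {f : ι → Ω → ℝ} (h : ∀ j, IsStoppingTime F (fun ω => (f j ω : WithTop ℝ))) :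
    IsStoppingTime F fun ω => ((⨅ j, f j ω : ℝ) : WithTop ℝ) := by
  cases isEmpty_or_nonempty ι with
  | inl hemp =>
    simp only [Real.iInf_of_isEmpty]
    exact isStoppingTime_const F 0
  | inr hne =>
    intro t
    have hset : {ω | (⨅ j, f j ω) ≤ t} = ⋃ j, {ω | f j ω ≤ t} := by
      ext ω
      simp only [Set.mem_setOf_eq, Set.mem_iUnion]
      constructor
      · intro hle
        obtain ⟨j0, hj0⟩ := Finite.exists_min fun j => f j ω
        have heq : (⨅ j, f j ω) = f j0 ω :=
          le_antisymm (ciInf_le (Set.Finite.bddBelow (Set.finite_range _)) j0) (le_ciInf hj0)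
        exact ⟨j0, heq ▸ hle⟩
      · rintro ⟨j, hj⟩
        exact le_trans (ciInf_le (Set.Finite.bddBelow (Set.finite_range _)) j) hj
    show MeasurableSet[F t] {ω | ((⨅ j, f j ω : ℝ) : WithTop ℝ) ≤ (t : WithTop ℝ)}
    simp only [WithTop.coe_le_coe]
    rw [hset]
    exact MeasurableSet.iUnion fun j => by simpa only [WithTop.coe_le_coe] using h j t

private lemma super_os {Ω : Type*} {m : MeasurableSpace Ω} {μ : Measure Ω} [IsFiniteMeasure μ]
    {F : Filtration ℝ m} {M : ℝ → Ω → ℝ} (hM : Supermartingale M F μ)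
    {θ : Ω → ℝ} (hθ : IsStoppingTime F (fun ω => (θ ω : WithTop ℝ))) (hθ0 : ∀ ω, 0 ≤ θ ω)
    {d : ℝ} (hd : 0 < d) {K : ℕ} (hK : ∀ ω, θ ω ≤ K * d) :
    Integrable (fun ω => M (((⌈θ ω / d⌉ : ℤ) : ℝ) * d) ω) μ ∧
      ∫ ω, M (((⌈θ ω / d⌉ : ℤ) : ℝ) * d) ω ∂μ ≤ ∫ ω, M 0 ω ∂μ := by
  classical
  set e : ℕ → ℝ := fun k => ((min k K : ℕ) : ℝ) * d with he
  have he_mono : Monotone e := fun k l hkl => by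
    have : ((min k K : ℕ) : ℝ) ≤ ((min l K : ℕ) : ℝ) := by
      exact_mod_cast min_le_min hkl le_rfl
    exact mul_le_mul_of_nonneg_right this hd.le
  set G : Filtration ℕ m := ⟨fun k => F (e k), fun k l hkl => F.mono (he_mono hkl),
    fun k => F.le _⟩ with hG
  set f : ℕ → Ω → ℝ := fun k => M (e k) with hf
  have hGsuper : Supermartingale f G μ :=
    ⟨fun k => hM.1 (e k), fun k l hkl => hM.2.1 (e k) (e l) (he_mono hkl),
      fun k => hM.2.2 (e k)⟩
  set κ : Ω → ℕ := fun ω => (⌈θ ω / d⌉).toNat with hκ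
  have hceil0 : ∀ ω, 0 ≤ ⌈θ ω / d⌉ := fun ω => Int.ceil_nonneg (div_nonneg (hθ0 ω) hd.le)
  have hκK : ∀ ω, κ ω ≤ K := fun ω => by
    refine Int.toNat_le.2 (Int.ceil_le.2 ?_)
    push_cast
    exact (div_le_iff₀ hd).2 (hK ω)
  have hκst : IsStoppingTime G (fun ω => (κ ω : WithTop ℕ)) := by
    intro k
    have hset : {ω | (κ ω : WithTop ℕ) ≤ (k : WithTop ℕ)}
        = {ω | (θ ω : WithTop ℝ) ≤ (((k : ℝ) * d : ℝ) : WithTop ℝ)} := by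
      ext ω
      simp only [Set.mem_setOf_eq, hκ, WithTop.coe_le_coe, Nat.cast_le]
      rw [Int.toNat_le, Int.ceil_le, ← div_le_iff₀ hd]
      push_cast
      rfl
    show MeasurableSet[G k] {ω | (κ ω : WithTop ℕ) ≤ (k : WithTop ℕ)}
    rw [hset]
    rcases le_or_gt k K with hkK | hKk
    · have hek : e k = (k : ℝ) * d := by
        simp only [he, min_eq_left hkK]
      show MeasurableSet[F (e k)] {ω | (θ ω : WithTop ℝ) ≤ (((k : ℝ) * d : ℝ) : WithTop ℝ)}
      rw [hek]
      exact hθ ((k : ℝ) * d)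
    · have : {ω | (θ ω : WithTop ℝ) ≤ (((k : ℝ) * d : ℝ) : WithTop ℝ)} = Set.univ := by
        refine Set.eq_univ_of_forall fun ω => WithTop.coe_le_coe.2 ((hK ω).trans ?_)
        exact mul_le_mul_of_nonneg_right (by exact_mod_cast hKk.le) hd.le
      rw [this]
      exact MeasurableSet.univ
  have hsv : stoppedValue f (fun ω => (κ ω : WithTop ℕ)) = fun ω => M (((⌈θ ω / d⌉ : ℤ) : ℝ) * d) ω := by
    funext ω
    have h1 : min (κ ω) K = κ ω := min_eq_left (hκK ω)
    have h2 : ((κ ω : ℕ) : ℝ) = ((⌈θ ω / d⌉ : ℤ) : ℝ) := by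
      rw [hκ]
      exact_mod_cast congrArg (fun z : ℤ => (z : ℝ)) (Int.toNat_of_nonneg (hceil0 ω))
    show M (((min (κ ω) K : ℕ) : ℝ) * d) ω = M (((⌈θ ω / d⌉ : ℤ) : ℝ) * d) ω
    rw [h1, h2]
  have hint : Integrable (stoppedValue f (fun ω => (κ ω : WithTop ℕ))) μ :=
    integrable_stoppedValue ℕ hκst (fun k => hM.2.2 (e k)) (fun ω => WithTop.coe_le_coe.2 (hκK ω))
  have hmono := hGsuper.neg.expected_stoppedValue_mono
    (isStoppingTime_const G 0) hκst (fun ω => WithTop.coe_le_coe.2 (Nat.zero_le _))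
    (fun ω => WithTop.coe_le_coe.2 (hκK ω))
  have hneg1 : stoppedValue (-f) (fun _ => (0:ℕ)) = fun ω => -(stoppedValue f (fun _ => (0:ℕ)) ω) := rfl
  have hneg2 : stoppedValue (-f) (fun ω => (κ ω : WithTop ℕ)) = fun ω => -(stoppedValue f (fun ω => (κ ω : WithTop ℕ)) ω) := rfl
  have h0 : stoppedValue f (fun _ => (0:ℕ)) = M 0 := by
    funext ω
    show M (((min 0 K : ℕ) : ℝ) * d) ω = M 0 ω
    simp
  constructor
  · exact hsv ▸ hint
  · have hmono' : ∫ ω, -(stoppedValue f (fun _ => (0:ℕ)) ω) ∂μ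
        ≤ ∫ ω, -(stoppedValue f (fun ω => (κ ω : WithTop ℕ)) ω) ∂μ := by
      rw [← hneg1, ← hneg2] at *
      exact hmono
    rw [integral_neg, integral_neg] at hmono'
    have := neg_le_neg_iff.1 hmono'
    rw [hsv, h0] at this
    exact this


/-- the streamline proposition — the verification hypotheses (i)-(iii)
imply that `(τ*_1, …, τ*_N)` is a Nash equilibrium point and
`J_i(τ*_1, …, τ*_N) = E[W^i_0]`. -/
theorem stmt3 {Ω : Type*} {m : MeasurableSpace Ω} (μ : Measure Ω) [IsProbabilityMeasure μ]
    (F : Filtration ℝ m) (T : ℝ) (hT : 0 ≤ T) (N : ℕ)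
    (X Q Y : Fin N → ℝ → Ω → ℝ)
    (hprog : ∀ i, ProgMeasurable F (X i) ∧ ProgMeasurable F (Q i) ∧ ProgMeasurable F (Y i))
    (hD : ∀ i, ClassD F μ T (X i) ∧ ClassD F μ T (Q i) ∧ ClassD F μ T (Y i))
    (hXQY : ∀ i, ∀ᵐ ω ∂μ, ∀ t, t ≤ T → X i t ω ≤ Q i t ω ∧ Q i t ω ≤ Y i t ω)
    (τstar : Fin N → Ω → ℝ) (hst : ∀ i, IsStoppingTime F (fun ω => (τstar i ω : WithTop ℝ)))
    (hτT : ∀ i ω, τstar i ω ∈ Set.Icc 0 T)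
    (Wp : Fin N → ℝ → Ω → ℝ) (hWad : ∀ i, Adapted F (Wp i)) (hWrc : ∀ i, RCLL (Wp i))
    (hmart : ∀ i, Martingale (fun t ω => Wp i (min t (⨅ j, τstar j ω)) ω) F μ)
    (hsuper : ∀ i, Supermartingale
      (fun t ω => Wp i (min t (⨅ j : {j : Fin N // j ≠ i}, τstar j.1 ω)) ω) F μ)
    (hdom : ∀ i, ∀ᵐ ω ∂μ, ∀ t,
      t < (⨅ j : {j : Fin N // j ≠ i}, τstar j.1 ω) → X i t ω ≤ Wp i t ω)
    (heq : ∀ i, ∀ᵐ ω ∂μ, τstar i ω < (⨅ j : {j : Fin N // j ≠ i}, τstar j.1 ω) →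
      Wp i (τstar i ω) ω = X i (τstar i ω) ω)
    (hiii1 : ∀ i, ∀ᵐ ω ∂μ,
      Wp i (⨅ j : {j : Fin N // j ≠ i}, τstar j.1 ω) ω =
        (if (⨅ j : {j : Fin N // j ≠ i}, τstar j.1 ω) < T
         then Y i (⨅ j : {j : Fin N // j ≠ i}, τstar j.1 ω) ω else Q i T ω))
    (hiii2 : ∀ i, ∀ᵐ ω ∂μ,
      ((⨅ j : {j : Fin N // j ≠ i}, τstar j.1 ω) = τstar i ω ∧
        (⨅ j : {j : Fin N // j ≠ i}, τstar j.1 ω) < T) →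
      Y i (⨅ j : {j : Fin N // j ≠ i}, τstar j.1 ω) ω =
        Q i (⨅ j : {j : Fin N // j ≠ i}, τstar j.1 ω) ω) :
    (∀ i (θ : Ω → ℝ), IsStoppingTime F (fun ω => (θ ω : WithTop ℝ)) → (∀ ω, θ ω ∈ Set.Icc 0 T) →
      J μ X Q Y i (Function.update τstar i θ) ≤ J μ X Q Y i τstar) ∧
    ∀ i, J μ X Q Y i τstar = ∫ ω, Wp i 0 ω ∂μ := by
  classical
  have hRi_st : ∀ i : Fin N,
      IsStoppingTime F fun ω => ((⨅ j : {j : Fin N // j ≠ i}, τstar j.1 ω : ℝ) : WithTop ℝ) :=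
    fun i => isStoppingTime_iInf_fin fun j => hst j.1
  have hRi_mem : ∀ (i : Fin N) ω,
      (⨅ j : {j : Fin N // j ≠ i}, τstar j.1 ω) ∈ Set.Icc (0:ℝ) T := by
    intro i ω
    cases isEmpty_or_nonempty {j : Fin N // j ≠ i} with
    | inl hemp =>
      rw [Real.iInf_of_isEmpty]
      exact ⟨le_rfl, hT⟩
    | inr hne =>
      constructor
      · exact le_ciInf fun j => (hτT j.1 ω).1
      · obtain ⟨j0⟩ := hne
        exact le_trans (ciInf_le (Set.Finite.bddBelow (Set.finite_range _)) j0) (hτT j0.1 ω).2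
  -- Part B : the value of the game
  have partB : ∀ i, J μ X Q Y i τstar = ∫ ω, Wp i 0 ω ∂μ := by
    intro i
    have hpay : (fun ω =>
        (if τstar i ω < ⨅ j : {j : Fin N // j ≠ i}, τstar j.1 ω then X i (τstar i ω) ω
         else if τstar i ω = ⨅ j : {j : Fin N // j ≠ i}, τstar j.1 ω then Q i (τstar i ω) ω
         else Y i (⨅ j : {j : Fin N // j ≠ i}, τstar j.1 ω) ω))
        =ᵐ[μ] fun ω =>
          Wp i (min (τstar i ω) (⨅ j : {j : Fin N // j ≠ i}, τstar j.1 ω)) ω := by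
      filter_upwards [heq i, hiii1 i, hiii2 i] with ω h1 h2 h3
      rcases lt_trichotomy (τstar i ω) (⨅ j : {j : Fin N // j ≠ i}, τstar j.1 ω)
        with hlt | heqc | hgt
      · rw [if_pos hlt, min_eq_left hlt.le, h1 hlt]
      · rw [if_neg (heqc ▸ lt_irrefl _), if_pos heqc, min_eq_right heqc.ge, h2]
        by_cases hT' : (⨅ j : {j : Fin N // j ≠ i}, τstar j.1 ω) < T
        · rw [if_pos hT', h3 ⟨heqc.symm, hT'⟩, heqc]
        · have hRT : (⨅ j : {j : Fin N // j ≠ i}, τstar j.1 ω) = T :=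
            le_antisymm (hRi_mem i ω).2 (not_lt.1 hT')
          rw [if_neg hT', heqc, hRT]
      · rw [if_neg (lt_asymm hgt), if_neg hgt.ne', min_eq_right hgt.le, h2,
          if_pos (lt_of_lt_of_le hgt (hτT i ω).2)]
    have hJdef : J μ X Q Y i τstar = ∫ ω,
        (if τstar i ω < ⨅ j : {j : Fin N // j ≠ i}, τstar j.1 ω then X i (τstar i ω) ω
         else if τstar i ω = ⨅ j : {j : Fin N // j ≠ i}, τstar j.1 ω then Q i (τstar i ω) ω
         else Y i (⨅ j : {j : Fin N // j ≠ i}, τstar j.1 ω) ω) ∂μ := rfl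
    rw [hJdef, integral_congr_ae hpay]
    cases isEmpty_or_nonempty {j : Fin N // j ≠ i} with
    | inl hemp =>
      have hz : ∀ ω, min (τstar i ω) (⨅ j : {j : Fin N // j ≠ i}, τstar j.1 ω) = 0 :=
        fun ω => by rw [Real.iInf_of_isEmpty]; exact min_eq_right (hτT i ω).1
      simp only [hz]
    | inr hne =>
      haveI : Nonempty (Fin N) := ⟨i⟩
      have hbdd : ∀ ω, BddBelow (Set.range fun j : Fin N => τstar j ω) :=
        fun ω => Set.Finite.bddBelow (Set.finite_range _)
      have hbdd' : ∀ ω, BddBelow (Set.range fun j : {j : Fin N // j ≠ i} => τstar j.1 ω) :=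
        fun ω => Set.Finite.bddBelow (Set.finite_range _)
      have hminR : ∀ ω, min (τstar i ω) (⨅ j : {j : Fin N // j ≠ i}, τstar j.1 ω)
          = ⨅ j : Fin N, τstar j ω := by
        intro ω
        refine le_antisymm (le_ciInf fun j => ?_)
          (le_min (ciInf_le (hbdd ω) i) (le_ciInf fun j => ciInf_le (hbdd ω) j.1))
        by_cases hj : j = i
        · rw [hj]; exact min_le_left _ _
        · exact le_trans (min_le_right _ _) (ciInf_le (hbdd' ω) ⟨j, hj⟩)
      have hR_mem : ∀ ω, (⨅ j : Fin N, τstar j ω) ∈ Set.Icc (0:ℝ) T := fun ω =>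
        ⟨le_ciInf fun j => (hτT j ω).1, le_trans (ciInf_le (hbdd ω) i) (hτT i ω).2⟩
      have h1 : (fun ω =>
            Wp i (min (τstar i ω) (⨅ j : {j : Fin N // j ≠ i}, τstar j.1 ω)) ω)
          = fun ω => Wp i (min T (⨅ j : Fin N, τstar j ω)) ω := funext fun ω => by
        rw [hminR ω, min_eq_right (hR_mem ω).2]
      have h2 : (fun ω => Wp i (min 0 (⨅ j : Fin N, τstar j ω)) ω) = fun ω => Wp i 0 ω :=
        funext fun ω => by rw [min_eq_left (hR_mem ω).1]
      rw [h1, ← h2]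
      have hcond := (hmart i).2 0 T hT
      rw [← integral_condExp (F.le 0)
        (f := fun ω => Wp i (min T (⨅ j : Fin N, τstar j ω)) ω)]
      exact integral_congr_ae hcond
  refine ⟨?_, partB⟩
  intro i θ hθ hθmem
  rcases eq_or_lt_of_le hT with hT0 | hTpos
  · have hθτ : θ = τstar i := funext fun ω => by
      have h1 := (hθmem ω).1; have h2 := (hθmem ω).2
      have h3 := (hτT i ω).1; have h4 := (hτT i ω).2
      rw [← hT0] at h2 h4
      linarith
    rw [hθτ, Function.update_eq_self]
  -- main case : T > 0
  have hRist := hRi_st i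
  have hRimem := hRi_mem i
  have hθmeas : Measurable θ :=
    measurable_of_Iic fun t => F.le t _ (by have := hθ t; simp only [WithTop.coe_le_coe] at this; exact this)
  have hRimeas : Measurable (fun ω => ⨅ j : {j : Fin N // j ≠ i}, τstar j.1 ω) :=
    measurable_of_Iic fun t => F.le t _ (by have := hRist t; simp only [WithTop.coe_le_coe] at this; exact this)
  have hXint : Integrable (fun ω => X i (θ ω) ω) μ := classD_mem (hD i).1 hθ hθmem
  have hQint : Integrable (fun ω => Q i (θ ω) ω) μ := classD_mem (hD i).2.1 hθ hθmem
  have hYint : Integrable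
      (fun ω => Y i (⨅ j : {j : Fin N // j ≠ i}, τstar j.1 ω) ω) μ :=
    classD_mem (hD i).2.2 hRist hRimem
  have hQTint : Integrable (fun ω => Q i T ω) μ :=
    classD_mem (hD i).2.1 (isStoppingTime_const F T) fun ω => ⟨hT, le_rfl⟩
  have hpayint : Integrable (fun ω =>
      if θ ω < ⨅ j : {j : Fin N // j ≠ i}, τstar j.1 ω then X i (θ ω) ω
      else if θ ω = ⨅ j : {j : Fin N // j ≠ i}, τstar j.1 ω then Q i (θ ω) ω
      else Y i (⨅ j : {j : Fin N // j ≠ i}, τstar j.1 ω) ω) μ :=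
    integrable_ite (measurableSet_lt hθmeas hRimeas) hXint
      (integrable_ite (measurableSet_eq_fun hθmeas hRimeas) hQint hYint)
  -- rewrite J of the updated profile
  have hiinf_upd : ∀ ω, (⨅ j : {j : Fin N // j ≠ i}, Function.update τstar i θ j.1 ω)
      = ⨅ j : {j : Fin N // j ≠ i}, τstar j.1 ω := fun ω =>
    congrArg iInf (funext fun j => by rw [Function.update_of_ne j.2])
  have hJupd : J μ X Q Y i (Function.update τstar i θ) = ∫ ω,
      (if θ ω < ⨅ j : {j : Fin N // j ≠ i}, τstar j.1 ω then X i (θ ω) ω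
       else if θ ω = ⨅ j : {j : Fin N // j ≠ i}, τstar j.1 ω then Q i (θ ω) ω
       else Y i (⨅ j : {j : Fin N // j ≠ i}, τstar j.1 ω) ω) ∂μ := by
    have hJdef : J μ X Q Y i (Function.update τstar i θ) = ∫ ω,
        (if Function.update τstar i θ i ω <
            ⨅ j : {j : Fin N // j ≠ i}, Function.update τstar i θ j.1 ω then
          X i (Function.update τstar i θ i ω) ω
         else if Function.update τstar i θ i ω =
            ⨅ j : {j : Fin N // j ≠ i}, Function.update τstar i θ j.1 ω then
          Q i (Function.update τstar i θ i ω) ω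
         else Y i (⨅ j : {j : Fin N // j ≠ i}, Function.update τstar i θ j.1 ω) ω) ∂μ := rfl
    rw [hJdef]
    congr 1
    funext ω
    rw [Function.update_self, hiinf_upd ω]
  -- grid approximations
  have hθn_ge : ∀ (n : ℕ) ω, θ ω ≤ ((⌈θ ω / (T / 2 ^ n)⌉ : ℤ) : ℝ) * (T / 2 ^ n) := by
    intro n ω
    have hd : (0:ℝ) < T / 2 ^ n := by positivity
    calc θ ω = θ ω / (T / 2 ^ n) * (T / 2 ^ n) := (div_mul_cancel₀ _ hd.ne').symm
      _ ≤ _ := mul_le_mul_of_nonneg_right (Int.le_ceil _) hd.le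
  have hθn_le : ∀ (n : ℕ) ω,
      ((⌈θ ω / (T / 2 ^ n)⌉ : ℤ) : ℝ) * (T / 2 ^ n) ≤ θ ω + T / 2 ^ n := by
    intro n ω
    have hd : (0:ℝ) < T / 2 ^ n := by positivity
    have h1 : ((⌈θ ω / (T / 2 ^ n)⌉ : ℤ) : ℝ) ≤ θ ω / (T / 2 ^ n) + 1 :=
      (Int.ceil_lt_add_one _).le
    calc ((⌈θ ω / (T / 2 ^ n)⌉ : ℤ) : ℝ) * (T / 2 ^ n)
        ≤ (θ ω / (T / 2 ^ n) + 1) * (T / 2 ^ n) := mul_le_mul_of_nonneg_right h1 hd.le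
      _ = θ ω + T / 2 ^ n := by field_simp
  have hθn_mem : ∀ (n : ℕ) ω,
      ((⌈θ ω / (T / 2 ^ n)⌉ : ℤ) : ℝ) * (T / 2 ^ n) ∈ Set.Icc (0:ℝ) T := by
    intro n ω
    have hd : (0:ℝ) < T / 2 ^ n := by positivity
    constructor
    · exact le_trans (hθmem ω).1 (hθn_ge n ω)
    · have h1 : θ ω / (T / 2 ^ n) ≤ (2:ℝ) ^ n := by
        rw [div_le_iff₀ hd]
        have h2 : (2:ℝ) ^ n * (T / 2 ^ n) = T := by field_simp
        rw [h2]; exact (hθmem ω).2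
      have h2 : ((⌈θ ω / (T / 2 ^ n)⌉ : ℤ) : ℝ) ≤ (2:ℝ) ^ n := by
        have h3 : (⌈θ ω / (T / 2 ^ n)⌉ : ℤ) ≤ ((2 ^ n : ℕ) : ℤ) :=
          Int.ceil_le.2 (by push_cast; exact h1)
        calc ((⌈θ ω / (T / 2 ^ n)⌉ : ℤ) : ℝ) ≤ ((2 ^ n : ℕ) : ℝ) := by exact_mod_cast h3
          _ = (2:ℝ) ^ n := by push_cast; ring
      calc ((⌈θ ω / (T / 2 ^ n)⌉ : ℤ) : ℝ) * (T / 2 ^ n)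
          ≤ (2:ℝ) ^ n * (T / 2 ^ n) := mul_le_mul_of_nonneg_right h2 hd.le
        _ = T := by field_simp
  have hθn_st : ∀ n : ℕ,
      IsStoppingTime F fun ω => ((((⌈θ ω / (T / 2 ^ n)⌉ : ℤ) : ℝ) * (T / 2 ^ n) : ℝ) : WithTop ℝ) :=
    fun n => grid_isStoppingTime hθ (by positivity)
  have hσ_st : ∀ n : ℕ, IsStoppingTime F fun ω =>
      ((min (((⌈θ ω / (T / 2 ^ n)⌉ : ℤ) : ℝ) * (T / 2 ^ n))
        (⨅ j : {j : Fin N // j ≠ i}, τstar j.1 ω) : ℝ) : WithTop ℝ) :=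
    fun n => by simpa only [WithTop.coe_min] using (hθn_st n).min hRist
  have hσ_mem : ∀ (n : ℕ) ω,
      min (((⌈θ ω / (T / 2 ^ n)⌉ : ℤ) : ℝ) * (T / 2 ^ n))
        (⨅ j : {j : Fin N // j ≠ i}, τstar j.1 ω) ∈ Set.Icc (0:ℝ) T := fun n ω =>
    ⟨le_min (hθn_mem n ω).1 (hRimem ω).1, le_trans (min_le_left _ _) (hθn_mem n ω).2⟩
  -- discrete optional sampling
  have hosn : ∀ n : ℕ,
      Integrable (fun ω => Wp i (min (((⌈θ ω / (T / 2 ^ n)⌉ : ℤ) : ℝ) * (T / 2 ^ n))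
        (⨅ j : {j : Fin N // j ≠ i}, τstar j.1 ω)) ω) μ ∧
      ∫ ω, Wp i (min (((⌈θ ω / (T / 2 ^ n)⌉ : ℤ) : ℝ) * (T / 2 ^ n))
        (⨅ j : {j : Fin N // j ≠ i}, τstar j.1 ω)) ω ∂μ
      ≤ ∫ ω, Wp i (min 0 (⨅ j : {j : Fin N // j ≠ i}, τstar j.1 ω)) ω ∂μ := by
    intro n
    have hd : (0:ℝ) < T / 2 ^ n := by positivity
    have hK : ∀ ω, θ ω ≤ ((2 ^ n : ℕ) : ℝ) * (T / 2 ^ n) := by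
      intro ω
      have h2 : ((2 ^ n : ℕ) : ℝ) * (T / 2 ^ n) = T := by push_cast; field_simp
      rw [h2]; exact (hθmem ω).2
    exact super_os (hsuper i) hθ (fun ω => (hθmem ω).1) hd hK
  have hM0 : (fun ω => Wp i (min 0 (⨅ j : {j : Fin N // j ≠ i}, τstar j.1 ω)) ω)
      = fun ω => Wp i 0 ω := funext fun ω => by rw [min_eq_left (hRimem ω).1]
  -- pointwise comparison of the payoff
  have hcmp : ∀ᵐ ω ∂μ,
      (if θ ω < ⨅ j : {j : Fin N // j ≠ i}, τstar j.1 ω then X i (θ ω) ω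
       else if θ ω = ⨅ j : {j : Fin N // j ≠ i}, τstar j.1 ω then Q i (θ ω) ω
       else Y i (⨅ j : {j : Fin N // j ≠ i}, τstar j.1 ω) ω)
      ≤ Wp i (min (θ ω) (⨅ j : {j : Fin N // j ≠ i}, τstar j.1 ω)) ω := by
    filter_upwards [hdom i, hiii1 i, hXQY i] with ω h1 h2 h3
    rcases lt_trichotomy (θ ω) (⨅ j : {j : Fin N // j ≠ i}, τstar j.1 ω)
      with hlt | heqc | hgt
    · rw [if_pos hlt, min_eq_left hlt.le]
      exact h1 _ hlt
    · rw [if_neg (heqc ▸ lt_irrefl _), if_pos heqc, min_eq_right heqc.ge, h2]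
      by_cases hT' : (⨅ j : {j : Fin N // j ≠ i}, τstar j.1 ω) < T
      · rw [if_pos hT', heqc]
        exact (h3 _ (hRimem ω).2).2
      · have hRT : (⨅ j : {j : Fin N // j ≠ i}, τstar j.1 ω) = T :=
          le_antisymm (hRimem ω).2 (not_lt.1 hT')
        rw [if_neg hT', heqc, hRT]
    · rw [if_neg (lt_asymm hgt), if_neg hgt.ne', min_eq_right hgt.le, h2,
        if_pos (lt_of_lt_of_le hgt (hθmem ω).2)]
  -- lower bounds
  have hgint : ∀ n : ℕ, Integrable (fun ω =>
      |X i (min (((⌈θ ω / (T / 2 ^ n)⌉ : ℤ) : ℝ) * (T / 2 ^ n))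
        (⨅ j : {j : Fin N // j ≠ i}, τstar j.1 ω)) ω|
      + |Y i (⨅ j : {j : Fin N // j ≠ i}, τstar j.1 ω) ω| + |Q i T ω|) μ := by
    intro n
    have e1 : Integrable (fun ω => |X i (min (((⌈θ ω / (T / 2 ^ n)⌉ : ℤ) : ℝ) * (T / 2 ^ n))
        (⨅ j : {j : Fin N // j ≠ i}, τstar j.1 ω)) ω|) μ :=
      (classD_mem (hD i).1 (hσ_st n) (hσ_mem n)).abs
    have e2 : Integrable (fun ω => |Y i (⨅ j : {j : Fin N // j ≠ i}, τstar j.1 ω) ω|) μ :=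
      hYint.abs
    have e3 : Integrable (fun ω => |Q i T ω|) μ := hQTint.abs
    exact (e1.add e2).add e3
  have hlb : ∀ n : ℕ, ∀ᵐ ω ∂μ,
      -(|X i (min (((⌈θ ω / (T / 2 ^ n)⌉ : ℤ) : ℝ) * (T / 2 ^ n))
          (⨅ j : {j : Fin N // j ≠ i}, τstar j.1 ω)) ω|
        + |Y i (⨅ j : {j : Fin N // j ≠ i}, τstar j.1 ω) ω| + |Q i T ω|)
      ≤ Wp i (min (((⌈θ ω / (T / 2 ^ n)⌉ : ℤ) : ℝ) * (T / 2 ^ n))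
          (⨅ j : {j : Fin N // j ≠ i}, τstar j.1 ω)) ω := by
    intro n
    filter_upwards [hdom i, hiii1 i] with ω h1 h2
    by_cases hlt : ((⌈θ ω / (T / 2 ^ n)⌉ : ℤ) : ℝ) * (T / 2 ^ n)
        < ⨅ j : {j : Fin N // j ≠ i}, τstar j.1 ω
    · rw [min_eq_left hlt.le]
      have h3 := h1 _ hlt
      have h4 := neg_abs_le (X i (((⌈θ ω / (T / 2 ^ n)⌉ : ℤ) : ℝ) * (T / 2 ^ n)) ω)
      have h5 := abs_nonneg (Y i (⨅ j : {j : Fin N // j ≠ i}, τstar j.1 ω) ω)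
      have h6 := abs_nonneg (Q i T ω)
      linarith
    · rw [min_eq_right (not_lt.1 hlt), h2]
      have h4 := abs_nonneg (X i (⨅ j : {j : Fin N // j ≠ i}, τstar j.1 ω) ω)
      by_cases hT' : (⨅ j : {j : Fin N // j ≠ i}, τstar j.1 ω) < T
      · rw [if_pos hT']
        have h5 := neg_abs_le (Y i (⨅ j : {j : Fin N // j ≠ i}, τstar j.1 ω) ω)
        have h6 := abs_nonneg (Q i T ω)
        linarith
      · rw [if_neg hT']
        have h5 := abs_nonneg (Y i (⨅ j : {j : Fin N // j ≠ i}, τstar j.1 ω) ω)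
        have h6 := neg_abs_le (Q i T ω)
        linarith
  -- convergence
  have hdn0 : Tendsto (fun n : ℕ => T / 2 ^ n) atTop (nhds 0) := by
    have h1 : Tendsto (fun n : ℕ => ((1:ℝ)/2) ^ n) atTop (nhds 0) :=
      tendsto_pow_atTop_nhds_zero_of_lt_one (by norm_num) (by norm_num)
    have h2 : (fun n : ℕ => T / 2 ^ n) = fun n : ℕ => T * ((1:ℝ)/2) ^ n := by
      funext n
      rw [div_pow, one_pow, div_eq_mul_inv, one_div, ← div_eq_mul_inv, div_eq_mul_inv T]
    rw [h2]
    simpa using h1.const_mul T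
  have hθn_tendsto : ∀ ω, Tendsto
      (fun n : ℕ => ((⌈θ ω / (T / 2 ^ n)⌉ : ℤ) : ℝ) * (T / 2 ^ n)) atTop (nhds (θ ω)) := by
    intro ω
    have hup : Tendsto (fun n : ℕ => θ ω + T / 2 ^ n) atTop (nhds (θ ω)) := by
      simpa using tendsto_const_nhds.add hdn0
    exact tendsto_of_tendsto_of_tendsto_of_le_of_le tendsto_const_nhds hup
      (fun n => hθn_ge n ω) (fun n => hθn_le n ω)
  have hconv : ∀ᵐ ω ∂μ, ∃ H : ℝ,
      Tendsto (fun n : ℕ => Wp i (min (((⌈θ ω / (T / 2 ^ n)⌉ : ℤ) : ℝ) * (T / 2 ^ n))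
        (⨅ j : {j : Fin N // j ≠ i}, τstar j.1 ω)) ω) atTop (nhds H) ∧
      (if θ ω < ⨅ j : {j : Fin N // j ≠ i}, τstar j.1 ω then X i (θ ω) ω
       else if θ ω = ⨅ j : {j : Fin N // j ≠ i}, τstar j.1 ω then Q i (θ ω) ω
       else Y i (⨅ j : {j : Fin N // j ≠ i}, τstar j.1 ω) ω) ≤ H := by
    filter_upwards [hcmp] with ω hcω
    refine ⟨Wp i (min (θ ω) (⨅ j : {j : Fin N // j ≠ i}, τstar j.1 ω)) ω, ?_, hcω⟩
    have hmin : Tendsto (fun n : ℕ => min (((⌈θ ω / (T / 2 ^ n)⌉ : ℤ) : ℝ) * (T / 2 ^ n))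
        (⨅ j : {j : Fin N // j ≠ i}, τstar j.1 ω)) atTop
        (nhdsWithin (min (θ ω) (⨅ j : {j : Fin N // j ≠ i}, τstar j.1 ω))
          (Set.Ici (min (θ ω) (⨅ j : {j : Fin N // j ≠ i}, τstar j.1 ω)))) := by
      refine tendsto_nhdsWithin_of_tendsto_nhds_of_eventually_within _
        ((hθn_tendsto ω).min tendsto_const_nhds)
        (Eventually.of_forall fun n => min_le_min (hθn_ge n ω) le_rfl)
    have hcomp := ((hWrc i ω
      (min (θ ω) (⨅ j : {j : Fin N // j ≠ i}, τstar j.1 ω))).1).tendsto.comp hmin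
    exact hcomp
  -- uniform tail bounds
  have htail : ∀ ε : ℝ, 0 < ε → ∃ lam : ℝ, ∀ n : ℕ,
      ∫ ω, max ((|X i (min (((⌈θ ω / (T / 2 ^ n)⌉ : ℤ) : ℝ) * (T / 2 ^ n))
          (⨅ j : {j : Fin N // j ≠ i}, τstar j.1 ω)) ω|
        + |Y i (⨅ j : {j : Fin N // j ≠ i}, τstar j.1 ω) ω| + |Q i T ω|) - lam) 0 ∂μ ≤ ε := by
    intro ε hε
    obtain ⟨lX, hlX0, hlX⟩ := classD_tail (hD i).1 (show (0:ℝ) < ε/3 by linarith)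
    obtain ⟨lY, hlY0, hlY⟩ := classD_tail (hD i).2.2 (show (0:ℝ) < ε/3 by linarith)
    obtain ⟨lQ, hlQ0, hlQ⟩ := classD_tail (hD i).2.1 (show (0:ℝ) < ε/3 by linarith)
    refine ⟨lX + lY + lQ, fun n => ?_⟩
    have e1 : Integrable (fun ω =>
        max (|X i (min (((⌈θ ω / (T / 2 ^ n)⌉ : ℤ) : ℝ) * (T / 2 ^ n))
          (⨅ j : {j : Fin N // j ≠ i}, τstar j.1 ω)) ω| - lX) 0) μ :=
      ((classD_mem (hD i).1 (hσ_st n) (hσ_mem n)).abs.sub (integrable_const _)).pos_part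
    have e2 : Integrable (fun ω =>
        max (|Y i (⨅ j : {j : Fin N // j ≠ i}, τstar j.1 ω) ω| - lY) 0) μ :=
      (hYint.abs.sub (integrable_const _)).pos_part
    have e3 : Integrable (fun ω => max (|Q i T ω| - lQ) 0) μ :=
      (hQTint.abs.sub (integrable_const _)).pos_part
    have elhs : Integrable (fun ω =>
        max ((|X i (min (((⌈θ ω / (T / 2 ^ n)⌉ : ℤ) : ℝ) * (T / 2 ^ n))
          (⨅ j : {j : Fin N // j ≠ i}, τstar j.1 ω)) ω|
        + |Y i (⨅ j : {j : Fin N // j ≠ i}, τstar j.1 ω) ω| + |Q i T ω|)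
        - (lX + lY + lQ)) 0) μ :=
      ((hgint n).sub (integrable_const _)).pos_part
    have hpt : ∀ ω,
        max ((|X i (min (((⌈θ ω / (T / 2 ^ n)⌉ : ℤ) : ℝ) * (T / 2 ^ n))
          (⨅ j : {j : Fin N // j ≠ i}, τstar j.1 ω)) ω|
        + |Y i (⨅ j : {j : Fin N // j ≠ i}, τstar j.1 ω) ω| + |Q i T ω|)
        - (lX + lY + lQ)) 0
        ≤ max (|X i (min (((⌈θ ω / (T / 2 ^ n)⌉ : ℤ) : ℝ) * (T / 2 ^ n))
          (⨅ j : {j : Fin N // j ≠ i}, τstar j.1 ω)) ω| - lX) 0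
        + max (|Y i (⨅ j : {j : Fin N // j ≠ i}, τstar j.1 ω) ω| - lY) 0
        + max (|Q i T ω| - lQ) 0 := by
      intro ω
      refine max_le ?_ ?_
      · have a1 := le_max_left (|X i (min (((⌈θ ω / (T / 2 ^ n)⌉ : ℤ) : ℝ) * (T / 2 ^ n))
          (⨅ j : {j : Fin N // j ≠ i}, τstar j.1 ω)) ω| - lX) 0
        have a2 := le_max_left
          (|Y i (⨅ j : {j : Fin N // j ≠ i}, τstar j.1 ω) ω| - lY) 0
        have a3 := le_max_left (|Q i T ω| - lQ) 0
        linarith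
      · have a1 := le_max_right (|X i (min (((⌈θ ω / (T / 2 ^ n)⌉ : ℤ) : ℝ) * (T / 2 ^ n))
          (⨅ j : {j : Fin N // j ≠ i}, τstar j.1 ω)) ω| - lX) 0
        have a2 := le_max_right
          (|Y i (⨅ j : {j : Fin N // j ≠ i}, τstar j.1 ω) ω| - lY) 0
        have a3 := le_max_right (|Q i T ω| - lQ) 0
        linarith
    have hstep : ∫ ω, max ((|X i (min (((⌈θ ω / (T / 2 ^ n)⌉ : ℤ) : ℝ) * (T / 2 ^ n))
          (⨅ j : {j : Fin N // j ≠ i}, τstar j.1 ω)) ω|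
        + |Y i (⨅ j : {j : Fin N // j ≠ i}, τstar j.1 ω) ω| + |Q i T ω|)
        - (lX + lY + lQ)) 0 ∂μ
        ≤ ∫ ω, (max (|X i (min (((⌈θ ω / (T / 2 ^ n)⌉ : ℤ) : ℝ) * (T / 2 ^ n))
          (⨅ j : {j : Fin N // j ≠ i}, τstar j.1 ω)) ω| - lX) 0
        + max (|Y i (⨅ j : {j : Fin N // j ≠ i}, τstar j.1 ω) ω| - lY) 0
        + max (|Q i T ω| - lQ) 0) ∂μ :=
      integral_mono elhs ((e1.add e2).add e3) hpt
    have hsplit : ∫ ω, (max (|X i (min (((⌈θ ω / (T / 2 ^ n)⌉ : ℤ) : ℝ) * (T / 2 ^ n))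
          (⨅ j : {j : Fin N // j ≠ i}, τstar j.1 ω)) ω| - lX) 0
        + max (|Y i (⨅ j : {j : Fin N // j ≠ i}, τstar j.1 ω) ω| - lY) 0
        + max (|Q i T ω| - lQ) 0) ∂μ
        = (∫ ω, max (|X i (min (((⌈θ ω / (T / 2 ^ n)⌉ : ℤ) : ℝ) * (T / 2 ^ n))
          (⨅ j : {j : Fin N // j ≠ i}, τstar j.1 ω)) ω| - lX) 0 ∂μ)
        + (∫ ω, max (|Y i (⨅ j : {j : Fin N // j ≠ i}, τstar j.1 ω) ω| - lY) 0 ∂μ)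
        + ∫ ω, max (|Q i T ω| - lQ) 0 ∂μ := by
      have e12 : Integrable (fun ω =>
          max (|X i (min (((⌈θ ω / (T / 2 ^ n)⌉ : ℤ) : ℝ) * (T / 2 ^ n))
            (⨅ j : {j : Fin N // j ≠ i}, τstar j.1 ω)) ω| - lX) 0
          + max (|Y i (⨅ j : {j : Fin N // j ≠ i}, τstar j.1 ω) ω| - lY) 0) μ := e1.add e2
      rw [integral_add e12 e3, integral_add e1 e2]
    have b1 := hlX _ (hσ_st n) (hσ_mem n)
    have b2 := hlY _ hRist hRimem
    have b3 := hlQ _ (isStoppingTime_const F T) fun ω => ⟨hT, le_rfl⟩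
    rw [hsplit] at hstep
    linarith
  -- apply the Fatou-type lemma
  have hkey : ∫ ω,
      (if θ ω < ⨅ j : {j : Fin N // j ≠ i}, τstar j.1 ω then X i (θ ω) ω
       else if θ ω = ⨅ j : {j : Fin N // j ≠ i}, τstar j.1 ω then Q i (θ ω) ω
       else Y i (⨅ j : {j : Fin N // j ≠ i}, τstar j.1 ω) ω) ∂μ
      ≤ ∫ ω, Wp i 0 ω ∂μ := by
    refine fatou_UI hpayint (fun n => (hosn n).1) hgint hlb hconv (fun n => ?_) htail
    have h1 := (hosn n).2
    rwa [hM0] at h1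
  rw [hJupd, partB i]
  exact hkey
end
end

section
/- In the approximating scheme, for any $n\ge N+1$ one has $\mu_n\le\theta_n$, $\tau_n\le\tau_{n-N}$ and $\theta_n\le\theta_{n-N}$, $P$-a.s.; consequently, for each fixed $i\in\{1,\dots,N\}$ the sequence $(\tau_{Nn+i})_{n}$ is nonincreasing and the limits $T^*_i=\lim_n\tau_{Nn+i}$ exist $P$-a.s. -/
open MeasureTheory Filter Topology

noncomputable section

/-- The predictable jumps of `f` are only nonnegative: along any announcing sequence of
stopping times the limsup of the values does not exceed the value at the limit. -/
def NoNegPredictableJumps {Ω : Type*} {m : MeasurableSpace Ω} (F : Filtration ℝ m)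
    (μ : Measure Ω) (f : ℝ → Ω → ℝ) : Prop :=
  ∀ σ : Ω → ℝ, IsStoppingTime F (fun ω => (σ ω : WithTop ℝ)) →
    ∀ σs : ℕ → Ω → ℝ, (∀ n, IsStoppingTime F (fun ω => (σs n ω : WithTop ℝ))) →
      (∀ ω, Monotone fun n => σs n ω) →
      (∀ ω, Tendsto (fun n => σs n ω) atTop (nhds (σ ω))) →
      (∀ ω n, σs n ω < σ ω) →
      ∀ᵐ ω ∂μ, Filter.limsup (fun n => f (σs n ω) ω) atTop ≤ f (σ ω) ω

/-- `Z` has the Snell-envelope property for `U`: for each time `t`, `Z t` is (a.e.) the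
essential supremum over stopping times `τ ∈ [t,T]` of `E[U_τ | F_t]`. -/
def IsSnell {Ω : Type*} {m : MeasurableSpace Ω} (F : Filtration ℝ m) (μ : Measure Ω)
    (T : ℝ) (U Z : ℝ → Ω → ℝ) : Prop :=
  ∀ t : ℝ,
    (∀ τ : Ω → ℝ, IsStoppingTime F (fun ω => (τ ω : WithTop ℝ)) → (∀ ω, τ ω ∈ Set.Icc t T) →
      μ[(fun ω => U (τ ω) ω)|F t] ≤ᵐ[μ] Z t) ∧
    (∀ ξ : Ω → ℝ,
      (∀ τ : Ω → ℝ, IsStoppingTime F (fun ω => (τ ω : WithTop ℝ)) → (∀ ω, τ ω ∈ Set.Icc t T) →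
        μ[(fun ω => U (τ ω) ω)|F t] ≤ᵐ[μ] ξ) → Z t ≤ᵐ[μ] ξ)

/-- Player index associated with the step `n = Nq + i`, `1 ≤ i ≤ N` (as an element of
`Fin N`, namely `i - 1`). -/
def idx (N : ℕ) (hN : 0 < N) (n : ℕ) : Fin N := ⟨(n - 1) % N, Nat.mod_lt _ hN⟩

/-- The approximating scheme of the `N`-player nonzero-sum Dynkin game:
`τ_1 = ⋯ = τ_N = T`; for `n ≥ N+1` (with `n = Nq + i`, `1 ≤ i ≤ N`),
`θ_n = min (τ_{n-1}, …, τ_{n-N+1})`,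
`U^n_t = X^i_t 1_{t < θ_n} + (Q^i_T 1_{θ_n = T} + Y^i_{θ_n} 1_{θ_n < T}) 1_{t ≥ θ_n}`,
`W^n` is the Snell envelope of `U^n`, `μ_n = inf {s ≥ 0 : W^n_s = U^n_s}` and
`τ_n = (μ_n ∧ τ_{n-N}) 1_{μ_n ∧ τ_{n-N} < θ_n} + τ_{n-N} 1_{μ_n ∧ τ_{n-N} ≥ θ_n}`. -/
structure Scheme {Ω : Type*} {m : MeasurableSpace Ω} (F : Filtration ℝ m) (μ : Measure Ω)
    (N : ℕ) (hN : 0 < N) (T : ℝ) (X Q Y : Fin N → ℝ → Ω → ℝ)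
    (tau theta muS : ℕ → Ω → ℝ) (U W : ℕ → ℝ → Ω → ℝ) : Prop where
  tau_init : ∀ n, n ≤ N → ∀ ω, tau n ω = T
  tau_st : ∀ n, IsStoppingTime F (fun ω => (tau n ω : WithTop ℝ))
  theta_def : ∀ n, 1 ≤ n → ∀ ω, theta n ω = ⨅ k : Fin (N - 1), tau (n - 1 - (k : ℕ)) ω
  U_def : ∀ n, N + 1 ≤ n → ∀ t ω, U n t ω =
    if t < theta n ω then X (idx N hN n) t ω
    else if theta n ω = T then Q (idx N hN n) T ω else Y (idx N hN n) (theta n ω) ω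
  W_snell : ∀ n, N + 1 ≤ n → IsSnell F μ T (U n) (W n)
  W_rcll : ∀ n, N + 1 ≤ n → RCLL (W n)
  mu_def : ∀ n, N + 1 ≤ n → ∀ ω, muS n ω = sInf {s : ℝ | 0 ≤ s ∧ W n s ω = U n s ω}
  mu_st : ∀ n, N + 1 ≤ n → IsStoppingTime F (fun ω => (muS n ω : WithTop ℝ))
  tau_rec : ∀ n, N + 1 ≤ n → ∀ ω, tau n ω =
    if min (muS n ω) (tau (n - N) ω) < theta n ω then min (muS n ω) (tau (n - N) ω)
    else tau (n - N) ω

/-- Assumptions (A1)-(A3) of the nonzero-sum Dynkin game, together with progressive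
measurability and class [D] of the data. -/
structure GameA {Ω : Type*} {m : MeasurableSpace Ω} (F : Filtration ℝ m) (μ : Measure Ω)
    {N : ℕ} (T : ℝ) (X Q Y : Fin N → ℝ → Ω → ℝ) : Prop where
  progX : ∀ i, ProgMeasurable F (X i)
  progQ : ∀ i, ProgMeasurable F (Q i)
  progY : ∀ i, ProgMeasurable F (Y i)
  dX : ∀ i, ClassD F μ T (X i)
  dQ : ∀ i, ClassD F μ T (Q i)
  dY : ∀ i, ClassD F μ T (Y i)
  a1 : ∀ i, RCLL (X i) ∧ NoNegPredictableJumps F μ (X i)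
  a2 : ∀ i ω t, ContinuousWithinAt (fun s => Y i s ω) (Set.Ici t) t
  a3 : ∀ i, ∀ᵐ ω ∂μ, ∀ t, t ≤ T → X i t ω ≤ Q i t ω ∧ Q i t ω ≤ Y i t ω

/-- Assumption (A4): for every stopping time `τ`, a.s.
`{Q^i_τ < Y^i_τ, τ < T} ⊆ ⋂_j {X^j_τ < Y^j_τ}`. -/
def A4 {Ω : Type*} {m : MeasurableSpace Ω} (F : Filtration ℝ m) (μ : Measure Ω)
    {N : ℕ} (T : ℝ) (X Q Y : Fin N → ℝ → Ω → ℝ) : Prop :=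
  ∀ τ : Ω → ℝ, IsStoppingTime F (fun ω => (τ ω : WithTop ℝ)) → (∀ ω, τ ω ∈ Set.Icc 0 T) →
    ∀ i : Fin N, ∀ᵐ ω ∂μ,
      (Q i (τ ω) ω < Y i (τ ω) ω ∧ τ ω < T) →
        ∀ j : Fin N, X j (τ ω) ω < Y j (τ ω) ω

section AuxLemmas

variable {Ω : Type*} {m : MeasurableSpace Ω} {F : Filtration ℝ m}

/-- A finite infimum of stopping times is a stopping time. -/
lemma isStoppingTime_iInf_fin_s8 {M : ℕ} [Nonempty (Fin M)] {f : Fin M → Ω → ℝ}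
    (hf : ∀ k, IsStoppingTime F (fun ω => (f k ω : WithTop ℝ))) :
    IsStoppingTime F (fun ω => ((⨅ k, f k ω : ℝ) : WithTop ℝ)) := by
  intro s
  have h : {ω | (⨅ k, f k ω) ≤ s} = ⋃ k, {ω | f k ω ≤ s} := by
    ext ω
    simp only [Set.mem_setOf_eq, Set.mem_iUnion]
    constructor
    · intro h
      obtain ⟨k0, hk0⟩ := Finite.exists_min (fun k => f k ω)
      exact ⟨k0, (le_ciInf hk0).trans h⟩
    · rintro ⟨k, hk⟩
      exact (ciInf_le (Set.Finite.bddBelow (Set.finite_range _)) k).trans hk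
  simp only [WithTop.coe_le_coe]
  rw [h]
  exact MeasurableSet.iUnion fun k => by
    have := hf k s; simp only [WithTop.coe_le_coe] at this; exact this

/-- Values of a class [D] process at a `[0,T]`-valued stopping time are integrable. -/
lemma ClassD.integrable_stopped {μ : Measure Ω} {T : ℝ} {f : ℝ → Ω → ℝ}
    (h : ClassD F μ T f) {τ : Ω → ℝ} (hst : IsStoppingTime F (fun ω => (τ ω : WithTop ℝ)))
    (hmem : ∀ ω, τ ω ∈ Set.Icc 0 T) : Integrable (fun ω => f (τ ω) ω) μ := by
  obtain ⟨hmeas, -, C, hC⟩ := h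
  exact memLp_one_iff_integrable.mp
    ⟨hmeas ⟨τ, hst, hmem⟩, lt_of_le_of_lt (hC ⟨τ, hst, hmem⟩) ENNReal.coe_lt_top⟩

/-- Key Snell-envelope fact: if the payoff `Un` is "frozen" from the stopping time `θ`
onwards, then `Wn t = Un t` a.e. on `{θ ≤ t}`, for every deterministic `t ∈ [0, T]`. -/
lemma snell_eq_on_event (μ : Measure Ω) [IsProbabilityMeasure μ]
    {T t : ℝ} (ht0 : 0 ≤ t) (htT : t ≤ T)
    {Xp Qp Yp : ℝ → Ω → ℝ} (hXprog : ProgMeasurable F Xp) (hQprog : ProgMeasurable F Qp)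
    (hYprog : ProgMeasurable F Yp)
    (hXD : ClassD F μ T Xp) (hQD : ClassD F μ T Qp) (hYD : ClassD F μ T Yp)
    {θ : Ω → ℝ} (hθ : IsStoppingTime F (fun ω => (θ ω : WithTop ℝ))) (hθmem : ∀ ω, θ ω ∈ Set.Icc 0 T)
    {Un Wn : ℝ → Ω → ℝ}
    (hU : ∀ s ω, Un s ω = if s < θ ω then Xp s ω
      else if θ ω = T then Qp T ω else Yp (θ ω) ω)
    (hSnell : IsSnell F μ T Un Wn) :
    ∀ᵐ ω ∂μ, θ ω ≤ t → Wn t ω = Un t ω := by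
  have hT : 0 ≤ T := ht0.trans htT
  -- the frozen value
  set Yt : Ω → ℝ := fun ω => if θ ω = T then Qp T ω else Yp (θ ω) ω with hYt_def
  -- the auxiliary process whose stopped value at `θ` is `Yt`
  set V : ℝ → Ω → ℝ := fun s ω => if s = T then Qp T ω else Yp s ω with hV_def
  have hVprog : ProgMeasurable F V := by
    intro r
    by_cases hr : r < T
    · have heq : (fun p : Set.Iic r × Ω => V (p.1 : ℝ) p.2) =
          fun p : Set.Iic r × Ω => Yp (p.1 : ℝ) p.2 := by
        funext p
        have hne : (p.1 : ℝ) ≠ T := ne_of_lt (lt_of_le_of_lt p.1.2 hr)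
        simp [hV_def, hne]
      rw [show (fun p : Set.Iic r × Ω => V (p.1 : ℝ) p.2) =
          fun p : Set.Iic r × Ω => Yp (p.1 : ℝ) p.2 from heq]
      exact hYprog r
    · push_neg at hr
      have hQT : StronglyMeasurable[F r] (fun ω => Qp T ω) :=
        (IsStronglyProgressive.stronglyAdapted hQprog T).mono (F.mono hr)
      have hcond : MeasurableSet[Subtype.instMeasurableSpace.prod (F r)]
          {p : Set.Iic r × Ω | (p.1 : ℝ) = T} := by
        have : Measurable[Subtype.instMeasurableSpace.prod (F r)]
            (fun p : Set.Iic r × Ω => (p.1 : ℝ)) :=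
          measurable_subtype_coe.comp measurable_fst
        exact this (measurableSet_singleton T)
      exact StronglyMeasurable.ite hcond
        (hQT.comp_measurable measurable_snd) (hYprog r)
  have hYt_eq : Yt = MeasureTheory.stoppedValue V (fun ω => (θ ω : WithTop ℝ)) := rfl
  have hYt_measT : StronglyMeasurable[F T] Yt := by
    rw [hYt_eq]
    exact stronglyMeasurable_stoppedValue_of_le hVprog hθ (fun ω => WithTop.coe_le_coe.mpr (hθmem ω).2)
  -- integrability of the frozen value
  have hQint : Integrable (fun ω => Qp T ω) μ :=
    hQD.integrable_stopped (isStoppingTime_const F T) (fun _ => ⟨hT, le_rfl⟩)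
  have hYθint : Integrable (fun ω => Yp (θ ω) ω) μ :=
    hYD.integrable_stopped hθ hθmem
  have hYt_int : Integrable Yt μ := by
    refine (hQint.abs.add hYθint.abs).mono'
      ((hYt_measT.mono (F.le T)).aestronglyMeasurable) ?_
    refine Filter.Eventually.of_forall fun ω => ?_
    rw [Real.norm_eq_abs]
    by_cases h : θ ω = T
    · simp only [hYt_def, if_pos h]
      exact le_add_of_nonneg_right (abs_nonneg _)
    · simp only [hYt_def, if_neg h]
      exact le_add_of_nonneg_left (abs_nonneg _)
  -- the event
  set A : Set Ω := {ω | θ ω ≤ t} with hA_def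
  have hAmeas : MeasurableSet[F t] A := by
    have := hθ t; simp only [WithTop.coe_le_coe] at this; exact this
  set g : Ω → ℝ := A.indicator Yt with hg_def
  have hg_meas : StronglyMeasurable[F t] g := by
    have hmin_st : IsStoppingTime F (fun ω => ((min (θ ω) t : ℝ) : WithTop ℝ)) := by
      simpa only [WithTop.coe_min] using hθ.min_const t
    have hsv : StronglyMeasurable[F t]
        (MeasureTheory.stoppedValue V (fun ω => ((min (θ ω) t : ℝ) : WithTop ℝ))) :=
      stronglyMeasurable_stoppedValue_of_le hVprog hmin_st
        (fun ω => WithTop.coe_le_coe.mpr (min_le_right _ _))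
    have hg_eq : g = A.indicator
        (MeasureTheory.stoppedValue V (fun ω => ((min (θ ω) t : ℝ) : WithTop ℝ))) := by
      funext ω
      by_cases h : ω ∈ A
      · rw [hg_def, Set.indicator_of_mem h, Set.indicator_of_mem h]
        have hmin : min (θ ω) t = θ ω := min_eq_left h
        show Yt ω = V (min (θ ω) t) ω
        rw [hmin]
      · rw [hg_def, Set.indicator_of_notMem h, Set.indicator_of_notMem h]
    rw [hg_eq]
    exact hsv.indicator hAmeas
  have hg_int : Integrable g μ := hYt_int.indicator (F.le t _ hAmeas)
  have hcond_g : μ[g|F t] = g :=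
    condExp_of_stronglyMeasurable (F.le t) hg_meas hg_int
  -- integrability of `Un` at a stopping time in `[t, T]`
  have hU_int : ∀ τ : Ω → ℝ, IsStoppingTime F (fun ω => (τ ω : WithTop ℝ)) → (∀ ω, τ ω ∈ Set.Icc t T) →
      Integrable (fun ω => Un (τ ω) ω) μ := by
    intro τ hst hmem
    have hmem' : ∀ ω, τ ω ∈ Set.Icc 0 T := fun ω => ⟨ht0.trans (hmem ω).1, (hmem ω).2⟩
    have hXint : Integrable (fun ω => Xp (τ ω) ω) μ :=
      hXD.integrable_stopped hst hmem'
    have hτm : Measurable τ := measurable_of_Iic fun s => F.le s _ (by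
      have := hst s; simp only [WithTop.coe_le_coe] at this; exact this)
    have hθm : Measurable θ := measurable_of_Iic fun s => F.le s _ (by
      have := hθ s; simp only [WithTop.coe_le_coe] at this; exact this)
    have hXmeas : StronglyMeasurable (fun ω => Xp (τ ω) ω) :=
      (stronglyMeasurable_stoppedValue_of_le hXprog hst
        (fun ω => WithTop.coe_le_coe.mpr (hmem' ω).2)).mono (F.le T)
    have hUeq : (fun ω => Un (τ ω) ω) =
        fun ω => if τ ω < θ ω then Xp (τ ω) ω else Yt ω := by
      funext ω; rw [hU (τ ω) ω]
    have hUmeas : AEStronglyMeasurable (fun ω => Un (τ ω) ω) μ := by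
      rw [hUeq]
      exact (StronglyMeasurable.ite (measurableSet_lt hτm hθm) hXmeas
        (hYt_measT.mono (F.le T))).aestronglyMeasurable
    refine (hXint.abs.add hYt_int.abs).mono' hUmeas ?_
    refine Filter.Eventually.of_forall fun ω => ?_
    rw [hU (τ ω) ω, Real.norm_eq_abs]
    by_cases hc : τ ω < θ ω
    · rw [if_pos hc]
      exact le_add_of_nonneg_right (abs_nonneg _)
    · rw [if_neg hc]
      exact le_add_of_nonneg_left (abs_nonneg _)
  obtain ⟨hup, hlow⟩ := hSnell t
  -- for any admissible stopping time, the conditional expectation equals `Yt` on `A`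
  have hkey_ind : ∀ τ : Ω → ℝ, IsStoppingTime F (fun ω => (τ ω : WithTop ℝ)) → (∀ ω, τ ω ∈ Set.Icc t T) →
      A.indicator (μ[(fun ω => Un (τ ω) ω)|F t]) =ᵐ[μ] g := by
    intro τ hst hmem
    have h1 : A.indicator (fun ω => Un (τ ω) ω) = g := by
      funext ω
      by_cases hω : ω ∈ A
      · rw [Set.indicator_of_mem hω, hg_def, Set.indicator_of_mem hω, hU (τ ω) ω,
          if_neg (not_lt.mpr (le_trans (hω : θ ω ≤ t) (hmem ω).1))]
      · rw [Set.indicator_of_notMem hω, hg_def, Set.indicator_of_notMem hω]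
    calc A.indicator (μ[(fun ω => Un (τ ω) ω)|F t])
        =ᵐ[μ] μ[A.indicator (fun ω => Un (τ ω) ω)|F t] :=
          (condExp_indicator (hU_int τ hst hmem) hAmeas).symm
      _ = μ[g|F t] := by rw [h1]
      _ = g := hcond_g
  have hconst_st : IsStoppingTime F (fun _ : Ω => t) := isStoppingTime_const F t
  have hconst_mem : ∀ ω : Ω, (fun _ : Ω => t) ω ∈ Set.Icc t T := fun _ => ⟨le_rfl, htT⟩
  -- on `A`, `Yt ≤ Wn t`
  have hWge : ∀ᵐ ω ∂μ, ω ∈ A → Yt ω ≤ Wn t ω := by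
    have h1 := hkey_ind _ hconst_st hconst_mem
    have h2 := hup _ hconst_st hconst_mem
    filter_upwards [h1, h2] with ω h1 h2 hω
    rw [hg_def, Set.indicator_of_mem hω, Set.indicator_of_mem hω] at h1
    rw [← h1]; exact h2
  -- on `A`, `Wn t ≤ Yt`
  have hWle : ∀ᵐ ω ∂μ, ω ∈ A → Wn t ω ≤ Yt ω := by
    have hWξ : Wn t ≤ᵐ[μ] fun ω => if θ ω ≤ t then Yt ω else Wn t ω := by
      apply hlow
      intro τ hst hmem
      have h1 := hkey_ind τ hst hmem
      have h2 := hup τ hst hmem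
      filter_upwards [h1, h2] with ω h1 h2
      by_cases hω : θ ω ≤ t
      · have hωA : ω ∈ A := hω
        rw [hg_def, Set.indicator_of_mem hωA, Set.indicator_of_mem hωA] at h1
        rw [if_pos hω]
        exact le_of_eq h1
      · rw [if_neg hω]
        exact h2
    filter_upwards [hWξ] with ω hω hmem
    have hmem' : θ ω ≤ t := hmem
    rwa [if_pos hmem'] at hω
  filter_upwards [hWge, hWle] with ω h1 h2 hθt
  have hUt : Un t ω = Yt ω := by
    rw [hU t ω, if_neg (not_lt.mpr hθt)]
  rw [hUt]
  exact le_antisymm (h2 hθt) (h1 hθt)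

end AuxLemmas

/-- monotonicity of the scheme: `μ_n ≤ θ_n`, `τ_n ≤ τ_{n-N}`,
`θ_n ≤ θ_{n-N}` for `n ≥ N+1`; consequently each `(τ_{Nq+i})_q` is nonincreasing and
converges a.s. -/
theorem stmt8 {Ω : Type*} {m : MeasurableSpace Ω} (μ : Measure Ω) [IsProbabilityMeasure μ]
    (F : Filtration ℝ m) (N : ℕ) (hN3 : 3 ≤ N) (hN : 0 < N) (T : ℝ) (hT : 0 ≤ T)
    (X Q Y : Fin N → ℝ → Ω → ℝ) (hA : GameA F μ T X Q Y)
    (tau theta muS : ℕ → Ω → ℝ) (U W : ℕ → ℝ → Ω → ℝ)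
    (S : Scheme F μ N hN T X Q Y tau theta muS U W) :
    (∀ n, N + 1 ≤ n → ∀ᵐ ω ∂μ,
      muS n ω ≤ theta n ω ∧ tau n ω ≤ tau (n - N) ω ∧ theta n ω ≤ theta (n - N) ω) ∧
    ∀ i, 1 ≤ i → i ≤ N → ∀ᵐ ω ∂μ,
      Antitone (fun q => tau (N * q + i) ω) ∧
      ∃ L : ℝ, Tendsto (fun q => tau (N * q + i) ω) atTop (nhds L) := by
  haveI : Nonempty (Fin (N - 1)) := ⟨⟨0, by omega⟩⟩
  -- τ takes values in [0, T], pointwise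
  have htau_mem : ∀ n ω, tau n ω ∈ Set.Icc 0 T := by
    intro n
    induction n using Nat.strong_induction_on with
    | _ n ih =>
      intro ω
      by_cases hn : n ≤ N
      · rw [S.tau_init n hn ω]; exact ⟨hT, le_rfl⟩
      · push_neg at hn
        have hn' : N + 1 ≤ n := hn
        have hprev := ih (n - N) (by omega) ω
        have hmu : 0 ≤ muS n ω := by
          rw [S.mu_def n hn' ω]
          exact Real.sInf_nonneg (fun x hx => hx.1)
        rw [S.tau_rec n hn' ω]
        split
        · exact ⟨le_min hmu hprev.1, (min_le_right _ _).trans hprev.2⟩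
        · exact hprev
  -- τ_n ≤ τ_{n-N}, pointwise
  have htau_le : ∀ n, N + 1 ≤ n → ∀ ω, tau n ω ≤ tau (n - N) ω := by
    intro n hn ω
    rw [S.tau_rec n hn ω]
    split
    · exact min_le_right _ _
    · exact le_rfl
  -- θ takes values in [0, T], pointwise
  have htheta_mem : ∀ n, 1 ≤ n → ∀ ω, theta n ω ∈ Set.Icc 0 T := by
    intro n hn ω
    rw [S.theta_def n hn ω]
    constructor
    · exact le_ciInf fun k => (htau_mem _ ω).1
    · exact ciInf_le_of_le (Set.Finite.bddBelow (Set.finite_range _))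
        (Classical.arbitrary _) (htau_mem _ ω).2
  -- θ_n ≤ θ_{n-N}, pointwise
  have htheta_le : ∀ n, N + 1 ≤ n → ∀ ω, theta n ω ≤ theta (n - N) ω := by
    intro n hn ω
    rw [S.theta_def n (by omega) ω, S.theta_def (n - N) (by omega) ω]
    refine ciInf_mono (Set.Finite.bddBelow (Set.finite_range _)) fun k => ?_
    have hk' : (k : ℕ) < N - 1 := k.2
    by_cases hk : n - 1 - (k : ℕ) ≤ N
    · rw [S.tau_init _ hk ω, S.tau_init (n - N - 1 - (k : ℕ)) (by omega) ω]
    · have h := htau_le (n - 1 - (k : ℕ)) (by omega) ω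
      have heq : n - 1 - (k : ℕ) - N = n - N - 1 - (k : ℕ) := by omega
      rwa [heq] at h
  -- θ is a stopping time
  have htheta_st : ∀ n, 1 ≤ n → IsStoppingTime F (fun ω => (theta n ω : WithTop ℝ)) := by
    intro n hn
    have heq : theta n = fun ω => ⨅ k : Fin (N - 1), tau (n - 1 - (k : ℕ)) ω :=
      funext (S.theta_def n hn)
    rw [heq]
    exact isStoppingTime_iInf_fin_s8 fun k => S.tau_st _
  -- μ_n ≤ θ_n a.s.
  have hmu_le : ∀ n, N + 1 ≤ n → ∀ᵐ ω ∂μ, muS n ω ≤ theta n ω := by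
    intro n hn
    have hkey : ∀ t : ℝ, 0 ≤ t → t ≤ T → ∀ᵐ ω ∂μ, theta n ω ≤ t → W n t ω = U n t ω := by
      intro t ht0 htT
      exact snell_eq_on_event μ ht0 htT (hA.progX _) (hA.progQ _) (hA.progY _)
        (hA.dX _) (hA.dQ _) (hA.dY _) (htheta_st n (by omega))
        (htheta_mem n (by omega)) (fun s ω => S.U_def n hn s ω) (S.W_snell n hn)
    have hallq : ∀ᵐ ω ∂μ, ∀ q : ℚ, 0 ≤ (q : ℝ) → (q : ℝ) ≤ T →
        theta n ω ≤ (q : ℝ) → W n (q : ℝ) ω = U n (q : ℝ) ω := by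
      rw [ae_all_iff]
      intro q
      by_cases h1 : 0 ≤ (q : ℝ) ∧ (q : ℝ) ≤ T
      · exact (hkey (q : ℝ) h1.1 h1.2).mono fun ω h _ _ => h
      · exact Filter.Eventually.of_forall fun ω h0 hT' => absurd ⟨h0, hT'⟩ h1
    filter_upwards [hallq, hkey T hT le_rfl] with ω hq hTω
    rw [S.mu_def n hn ω]
    have hθmem := htheta_mem n (by omega) ω
    have hbdd : BddBelow {s : ℝ | 0 ≤ s ∧ W n s ω = U n s ω} := ⟨0, fun x hx => hx.1⟩
    have hTmem : T ∈ {s : ℝ | 0 ≤ s ∧ W n s ω = U n s ω} := ⟨hT, hTω hθmem.2⟩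
    by_contra hcon
    push_neg at hcon
    have hθT : theta n ω < T := lt_of_lt_of_le hcon (csInf_le hbdd hTmem)
    obtain ⟨q, hq1, hq2⟩ := exists_rat_btwn
      (lt_min hcon hθT : theta n ω < min (sInf {s : ℝ | 0 ≤ s ∧ W n s ω = U n s ω}) T)
    have hq0 : 0 ≤ (q : ℝ) := le_trans hθmem.1 hq1.le
    have hqT : (q : ℝ) ≤ T := (hq2.trans_le (min_le_right _ _)).le
    have hmem : (q : ℝ) ∈ {s : ℝ | 0 ≤ s ∧ W n s ω = U n s ω} :=
      ⟨hq0, hq q hq0 hqT hq1.le⟩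
    exact absurd (csInf_le hbdd hmem) (not_le.mpr (hq2.trans_le (min_le_left _ _)))
  constructor
  · intro n hn
    filter_upwards [hmu_le n hn] with ω h1
    exact ⟨h1, htau_le n hn ω, htheta_le n hn ω⟩
  · intro i hi1 hiN
    refine Filter.Eventually.of_forall fun ω => ?_
    have hanti : Antitone fun q => tau (N * q + i) ω := by
      apply antitone_nat_of_succ_le
      intro q
      have hge : N + 1 ≤ N * (q + 1) + i :=
        add_le_add (Nat.le_mul_of_pos_right N (Nat.succ_pos q)) hi1
      have h := htau_le _ hge ω
      have he : N * (q + 1) + i = (N * q + i) + N := by ring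
      rw [he, Nat.add_sub_cancel] at h
      simpa only [he] using h
    refine ⟨hanti, ⨅ q, tau (N * q + i) ω, tendsto_atTop_ciInf hanti ?_⟩
    refine ⟨0, fun x hx => ?_⟩
    obtain ⟨q, rfl⟩ := hx
    exact (htau_mem _ ω).1
end
end

section
/- In the scheme, fix $n\ge 2$ and distinct indices $i_1<\dots<i_k$ in $\{1,\dots,N\}$ ($k\ge 2$), with $R^*_I=\min\{T^*_j: j\notin I\}$ (and $\min\emptyset=T$). Define $A_n=\bigcap_{j=1}^k\{R^*_I>\tau_{Nn+i_j}\ge\theta_{Nn+i_j}\}$. Then $A_n\subseteq A_{n-1}$, and since $P[A_0]=P[A_1]=0$, one has $P[A_n]=0$ for all $n\ge 0$. -/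
open MeasureTheory Filter Topology

noncomputable section

private lemma arith1 (N M i l : ℕ) (hN : 3 ≤ N) (hM : N ≤ M) (h1 : 1 ≤ i) (h2 : i ≤ N)
    (hl : l < N - 1) :
    ∃ r, 1 ≤ r ∧ r ≤ N ∧ r ≠ i ∧
      ((r < i ∧ M + i - 1 - l = M + r) ∨ (i < r ∧ M + i - 1 - l = M - N + r)) := by
  rcases lt_or_ge l (i - 1) with hc | hc
  · exact ⟨i - 1 - l, by omega, by omega, by omega, Or.inl ⟨by omega, by omega⟩⟩
  · exact ⟨N + i - 1 - l, by omega, by omega, by omega, Or.inr ⟨by omega, by omega⟩⟩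

private lemma arith2 (N M i r : ℕ) (hN : 3 ≤ N) (hM : N ≤ M) (h1 : 1 ≤ i) (h2 : i ≤ N)
    (hr1 : 1 ≤ r) (hr2 : r ≤ N) (hne : r ≠ i) :
    ∃ l, l < N - 1 ∧
      ((r < i ∧ M + i - 1 - l = M + r) ∨ (i < r ∧ M + i - 1 - l = M - N + r)) := by
  rcases lt_or_ge r i with hc | hc
  · exact ⟨i - 1 - r, by omega, Or.inl ⟨hc, by omega⟩⟩
  · exact ⟨N + i - 1 - r, by omega, Or.inr ⟨by omega, by omega⟩⟩

/-- Step 1 of Proposition 4.5: the events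
`A_n = ⋂_{j=1}^k {R*_I > τ_{Nn+i_j} ≥ θ_{Nn+i_j}}` are decreasing and null. -/
theorem stmt14 {Ω : Type*} {m : MeasurableSpace Ω} (μ : Measure Ω) [IsProbabilityMeasure μ]
    (F : Filtration ℝ m) (N : ℕ) (hN3 : 3 ≤ N) (hN : 0 < N) (T : ℝ) (hT : 0 ≤ T)
    (X Q Y : Fin N → ℝ → Ω → ℝ) (hA : GameA F μ T X Q Y)
    (tau theta muS : ℕ → Ω → ℝ) (U W : ℕ → ℝ → Ω → ℝ)
    (S : Scheme F μ N hN T X Q Y tau theta muS U W)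
    (hprev : ∀ n, N + 1 ≤ n → ∀ ω, muS n ω ≤ tau (n - N) ω)
    (Tstar : ℕ → Ω → ℝ)
    (hTlim : ∀ k, 1 ≤ k → k ≤ N → ∀ ω,
      Tendsto (fun q => tau (N * q + k) ω) atTop (nhds (Tstar k ω)))
    (k : ℕ) (hk : 2 ≤ k) (ii : Fin k → ℕ) (hmono : StrictMono ii)
    (hrange : ∀ j, 1 ≤ ii j ∧ ii j ≤ N)
    (RI : Ω → ℝ)
    (hRI : ∀ ω,
      (({j : ℕ | 1 ≤ j ∧ j ≤ N ∧ ∀ l, ii l ≠ j}).Nonempty →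
        RI ω = sInf ((fun j => Tstar j ω) '' {j : ℕ | 1 ≤ j ∧ j ≤ N ∧ ∀ l, ii l ≠ j})) ∧
      (¬ ({j : ℕ | 1 ≤ j ∧ j ≤ N ∧ ∀ l, ii l ≠ j}).Nonempty → RI ω = T))
    (hA0 : μ (⋂ j : Fin k, {ω : Ω |
      tau (N * 0 + ii j) ω < RI ω ∧ theta (N * 0 + ii j) ω ≤ tau (N * 0 + ii j) ω}) = 0)
    (hA1 : μ (⋂ j : Fin k, {ω : Ω |
      tau (N * 1 + ii j) ω < RI ω ∧ theta (N * 1 + ii j) ω ≤ tau (N * 1 + ii j) ω}) = 0) :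
    (∀ n, 2 ≤ n →
      (⋂ j : Fin k, {ω : Ω |
        tau (N * n + ii j) ω < RI ω ∧ theta (N * n + ii j) ω ≤ tau (N * n + ii j) ω})
      ⊆ ⋂ j : Fin k, {ω : Ω |
        tau (N * (n - 1) + ii j) ω < RI ω ∧
          theta (N * (n - 1) + ii j) ω ≤ tau (N * (n - 1) + ii j) ω}) ∧
    ∀ n, μ (⋂ j : Fin k, {ω : Ω |
      tau (N * n + ii j) ω < RI ω ∧ theta (N * n + ii j) ω ≤ tau (N * n + ii j) ω}) = 0 := by
  haveI hne1 : Nonempty (Fin (N - 1)) := ⟨⟨0, by omega⟩⟩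
  have htheta_le : ∀ mm, 1 ≤ mm → ∀ ω (l : ℕ), l < N - 1 →
      theta mm ω ≤ tau (mm - 1 - l) ω := by
    intro mm hm ω l hl
    rw [S.theta_def mm hm]
    exact ciInf_le (Set.Finite.bddBelow (Set.finite_range _)) (⟨l, hl⟩ : Fin (N - 1))
  have htheta_min : ∀ mm, 1 ≤ mm → ∀ ω, ∃ l : ℕ, l < N - 1 ∧
      theta mm ω = tau (mm - 1 - l) ω := by
    intro mm hm ω
    obtain ⟨l0, hl0⟩ := Finite.exists_min (fun x : Fin (N - 1) => tau (mm - 1 - (x : ℕ)) ω)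
    refine ⟨l0, l0.2, ?_⟩
    rw [S.theta_def mm hm]
    exact le_antisymm (ciInf_le (Set.Finite.bddBelow (Set.finite_range _)) l0) (le_ciInf hl0)
  have htau_anti : ∀ mm, N + 1 ≤ mm → ∀ ω, tau mm ω ≤ tau (mm - N) ω := by
    intro mm hm ω
    rw [S.tau_rec mm hm ω]
    split
    · exact min_le_right _ _
    · exact le_refl _
  have htau_step : ∀ q i, 1 ≤ i → ∀ ω, tau (N * (q + 1) + i) ω ≤ tau (N * q + i) ω := by
    intro q i hi ω
    obtain ⟨P, hP⟩ : ∃ P, N * q = P := ⟨_, rfl⟩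
    have hmul : N * (q + 1) = P + N := by rw [Nat.mul_succ, hP]
    rw [hmul, hP]
    have h1 : N + 1 ≤ P + N + i := by omega
    have h2 := htau_anti (P + N + i) h1 ω
    rwa [show P + N + i - N = P + i from by omega] at h2
  have htau_mono : ∀ i, 1 ≤ i → ∀ q d ω, tau (N * (q + d) + i) ω ≤ tau (N * q + i) ω := by
    intro i hi q d ω
    induction d with
    | zero => exact le_refl _
    | succ d ih =>
      have h : q + (d + 1) = (q + d) + 1 := by omega
      rw [h]
      exact le_trans (htau_step (q + d) i hi ω) ih
  have hTstar_le : ∀ r, 1 ≤ r → r ≤ N → ∀ q ω, Tstar r ω ≤ tau (N * q + r) ω := by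
    intro r h1 h2 q ω
    refine le_of_tendsto (hTlim r h1 h2 ω) ?_
    filter_upwards [Filter.eventually_ge_atTop q] with q' hq'
    obtain ⟨d, rfl⟩ := Nat.exists_eq_add_of_le hq'
    exact htau_mono r h1 q d ω
  have hRI_le : ∀ r, 1 ≤ r → r ≤ N → (∀ l, ii l ≠ r) → ∀ ω, RI ω ≤ Tstar r ω := by
    intro r h1 h2 hnr ω
    have hmem : r ∈ {j : ℕ | 1 ≤ j ∧ j ≤ N ∧ ∀ l, ii l ≠ j} := ⟨h1, h2, hnr⟩
    rw [(hRI ω).1 ⟨r, hmem⟩]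
    refine csInf_le ?_ ⟨r, hmem, rfl⟩
    exact Set.Finite.bddBelow (Set.Finite.image _
      ((Set.finite_Icc 1 N).subset fun x hx => Set.mem_Icc.mpr ⟨hx.1, hx.2.1⟩))
  have incl : ∀ n, 2 ≤ n →
      (⋂ j : Fin k, {ω : Ω |
        tau (N * n + ii j) ω < RI ω ∧ theta (N * n + ii j) ω ≤ tau (N * n + ii j) ω})
      ⊆ ⋂ j : Fin k, {ω : Ω |
        tau (N * (n - 1) + ii j) ω < RI ω ∧
          theta (N * (n - 1) + ii j) ω ≤ tau (N * (n - 1) + ii j) ω} := by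
    intro n hn ω hω
    simp only [Set.mem_iInter, Set.mem_setOf_eq] at hω ⊢
    obtain ⟨M, hMdef⟩ : ∃ M, N * (n - 1) = M := ⟨_, rfl⟩
    have hM1 : N * n = M + N := by
      rw [← hMdef]
      have h : n - 1 + 1 = n := by omega
      calc N * n = N * ((n - 1) + 1) := by rw [h]
        _ = N * (n - 1) + N := Nat.mul_succ N (n - 1)
    have hMN : N ≤ M := by
      rw [← hMdef]
      calc N = N * 1 := (Nat.mul_one N).symm
        _ ≤ N * (n - 1) := Nat.mul_le_mul (le_refl N) (by omega)
    simp only [hM1, hMdef] at hω ⊢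
    -- Step A: on the event, tau (M + ii j) = tau (M + N + ii j)
    have tau_eq : ∀ j, tau (M + ii j) ω = tau (M + N + ii j) ω := by
      intro j
      have hij := (hrange j).1
      have hm : N + 1 ≤ M + N + ii j := by omega
      have hrec := S.tau_rec _ hm ω
      rw [show M + N + ii j - N = M + ii j from by omega] at hrec
      by_cases hc : min (muS (M + N + ii j) ω) (tau (M + ii j) ω) < theta (M + N + ii j) ω
      · rw [if_pos hc] at hrec
        have h2 := (hω j).2
        rw [hrec] at h2
        exact absurd hc (not_lt.mpr h2)
      · rw [if_neg hc] at hrec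
        exact hrec.symm
    -- key fact: for each j there is j' ≠ j with smaller-or-equal stopping value
    have key : ∀ j, ∃ j', j' ≠ j ∧ tau (M + N + ii j') ω ≤ tau (M + N + ii j) ω := by
      intro j
      have hij1 := (hrange j).1
      have hij2 := (hrange j).2
      obtain ⟨l, hlN, hl⟩ := htheta_min (M + N + ii j) (by omega) ω
      obtain ⟨r, hr1, hr2, hrne, hcases⟩ :=
        arith1 N (M + N) (ii j) l hN3 (by omega) hij1 hij2 hlN
      by_cases hrI : ∃ j', ii j' = r
      · obtain ⟨j', hj'⟩ := hrI
        refine ⟨j', ?_, ?_⟩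
        · rintro rfl; exact hrne hj'.symm
        · rcases hcases with ⟨hlt', heq⟩ | ⟨hlt', heq⟩
          · rw [show M + N + ii j - 1 - l = M + N + ii j' from by omega] at hl
            rw [← hl]; exact (hω j).2
          · rw [show M + N + ii j - 1 - l = M + ii j' from by omega] at hl
            rw [tau_eq j'] at hl
            rw [← hl]; exact (hω j).2
      · exfalso
        push_neg at hrI
        have hRT := hRI_le r hr1 hr2 hrI ω
        have hcomp : RI ω ≤ tau (M + N + ii j - 1 - l) ω := by
          rcases hcases with ⟨_, heq⟩ | ⟨_, heq⟩
          · have h3 := hTstar_le r hr1 hr2 n ω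
            rw [hM1] at h3
            rw [show M + N + ii j - 1 - l = M + N + r from by omega]
            exact le_trans hRT h3
          · have h3 := hTstar_le r hr1 hr2 (n - 1) ω
            rw [hMdef] at h3
            rw [show M + N + ii j - 1 - l = M + r from by omega]
            exact le_trans hRT h3
        rw [← hl] at hcomp
        exact absurd (hω j).1 (not_lt.mpr (le_trans hcomp (hω j).2))
    -- recursion consequence for indices not in the "bad" set
    have hB : ∀ j, theta (M + ii j) ω ≤ tau (M + N + ii j) ω →
        tau (M - N + ii j) ω = tau (M + N + ii j) ω := by
      intro j hth'
      have hij := (hrange j).1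
      have hm : N + 1 ≤ M + ii j := by omega
      have hrec := S.tau_rec _ hm ω
      rw [show M + ii j - N = M - N + ii j from by omega] at hrec
      by_cases hc : min (muS (M + ii j) ω) (tau (M - N + ii j) ω) < theta (M + ii j) ω
      · rw [if_pos hc] at hrec
        rw [tau_eq j] at hrec
        rw [hrec] at hth'
        exact absurd hc (not_lt.mpr hth')
      · rw [if_neg hc] at hrec
        rw [← hrec]
        exact tau_eq j
    -- main: no index is "bad"
    suffices hsuff : ∀ j, theta (M + ii j) ω ≤ tau (M + N + ii j) ω by
      intro j
      constructor
      · rw [tau_eq j]; exact (hω j).1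
      · rw [tau_eq j]; exact hsuff j
    by_contra hcon
    push_neg at hcon
    obtain ⟨j₂, hj₂⟩ := hcon
    obtain ⟨j₀, hj₀S, hj₀min⟩ := Set.exists_min_image
      {j : Fin k | tau (M + N + ii j) ω < theta (M + ii j) ω}
      (fun j => tau (M + N + ii j) ω) (Set.toFinite _) ⟨j₂, hj₂⟩
    obtain ⟨j₁, hj₁S, hj₁max⟩ := Set.exists_max_image
      {j : Fin k | tau (M + N + ii j) ω < theta (M + ii j) ω ∧
        tau (M + N + ii j) ω ≤ tau (M + N + ii j₀) ω}
      (fun j => (j : ℕ)) (Set.toFinite _) ⟨j₀, hj₀S, le_refl _⟩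
    simp only [Set.mem_setOf_eq] at hj₀S hj₁S
    have hj₁S1 : tau (M + N + ii j₁) ω < theta (M + ii j₁) ω := hj₁S.1
    have hall : ∀ j', j' ≠ j₁ → tau (M + N + ii j₁) ω < tau (M + N + ii j') ω := by
      intro j' hne
      have hij1 := (hrange j₁).1
      have hij2 := (hrange j₁).2
      have hij1' := (hrange j').1
      have hij2' := (hrange j').2
      rcases hne.lt_or_gt with hlt | hlt
      · -- j' < j₁ : the component of θ at residue ii j' sits at index M + ii j'
        have hii : ii j' < ii j₁ := hmono hlt
        obtain ⟨l, hlN, hcase⟩ :=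
          arith2 N M (ii j₁) (ii j') hN3 hMN hij1 hij2 hij1' hij2' (by omega)
        rcases hcase with ⟨_, heq⟩ | ⟨hgt, _⟩
        swap
        · omega
        have hcomp := htheta_le (M + ii j₁) (by omega) ω l hlN
        rw [show M + ii j₁ - 1 - l = M + ii j' from by omega] at hcomp
        rw [tau_eq j'] at hcomp
        exact lt_of_lt_of_le hj₁S1 hcomp
      · -- j₁ < j' : the component sits at index M - N + ii j'
        have hii : ii j₁ < ii j' := hmono hlt
        obtain ⟨l, hlN, hcase⟩ :=
          arith2 N M (ii j₁) (ii j') hN3 hMN hij1 hij2 hij1' hij2' (by omega)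
        rcases hcase with ⟨hlt', _⟩ | ⟨_, heq⟩
        · omega
        have hcomp := htheta_le (M + ii j₁) (by omega) ω l hlN
        rw [show M + ii j₁ - 1 - l = M - N + ii j' from by omega] at hcomp
        by_cases hj'S : tau (M + N + ii j') ω < theta (M + ii j') ω
        · rcases lt_or_ge (tau (M + N + ii j₁) ω) (tau (M + N + ii j') ω) with h | h
          · exact h
          · exfalso
            have hmem2 : j' ∈ {j : Fin k | tau (M + N + ii j) ω < theta (M + ii j) ω ∧
                tau (M + N + ii j) ω ≤ tau (M + N + ii j₀) ω} :=
              ⟨hj'S, le_trans h hj₁S.2⟩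
            have hle := hj₁max j' hmem2
            have hlt2 : (j₁ : ℕ) < (j' : ℕ) := hlt
            omega
        · have hble := le_of_not_gt hj'S
          have hbeq := hB j' hble
          rw [← hbeq]
          exact lt_of_lt_of_le hj₁S1 hcomp
    obtain ⟨j', hne', hle'⟩ := key j₁
    exact absurd hle' (not_le.mpr (hall j' hne'))
  refine ⟨incl, ?_⟩
  intro n
  induction n with
  | zero => exact hA0
  | succ mm ih =>
    rcases mm with _ | m'
    · exact hA1
    · exact measure_mono_null (incl (m' + 2) (by omega)) ih
end
end
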